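/- arXiv:2306.04215 — 6 statements merged into one kernel-verified Lean document; each statement's English description precedes it below -/
import Mathlib

section
/- Let a > −1, C₁ > 0, δ > 0 and τ ∈ ℝ. Let d : [τ − δ, τ] → ℝ be continuous with d(τ) = 0, d(t) > 0 for all t ∈ [τ − δ, τ), differentiable on (τ − δ, τ), and satisfying d'(t) ≥ −C₁ · d(t)^{−(1+a)} for all t ∈ (τ − δ, τ). Then d(t) ≤ ((2+a) C₁ (τ − t))^{1/(2+a)} for all t ∈ [τ − δ, τ]. -/
/-- ODE comparison used in the proof of Theorem 2.4(iii): if `d` is continuous on `[τ-δ, τ]`,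
positive before `τ` with `d(τ) = 0`, differentiable on `(τ-δ, τ)` with
`d' ≥ -C₁ d^{-(1+a)}`, then `d(t) ≤ ((2+a) C₁ (τ - t))^{1/(2+a)}` on `[τ-δ, τ]`. -/
theorem stmt3 (a C₁ δ τ : ℝ) (ha : -1 < a) (hC₁ : 0 < C₁) (hδ : 0 < δ)
    (d : ℝ → ℝ)
    (hcont : ContinuousOn d (Set.Icc (τ - δ) τ))
    (hzero : d τ = 0)
    (hpos : ∀ t ∈ Set.Ico (τ - δ) τ, 0 < d t)
    (hdiff : ∀ t ∈ Set.Ioo (τ - δ) τ, DifferentiableAt ℝ d t)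
    (hineq : ∀ t ∈ Set.Ioo (τ - δ) τ, -C₁ * d t ^ (-(1 + a)) ≤ deriv d t) :
    ∀ t ∈ Set.Icc (τ - δ) τ, d t ≤ ((2 + a) * C₁ * (τ - t)) ^ ((1 : ℝ) / (2 + a)) := by
  intro t ht
  have hb : (0:ℝ) < 2 + a := by linarith
  have hd_nonneg : ∀ s ∈ Set.Icc (τ - δ) τ, 0 ≤ d s := by
    intro s hs
    rcases eq_or_lt_of_le hs.2 with h | h
    · rw [h, hzero]
    · exact (hpos s ⟨hs.1, h⟩).le
  set f : ℝ → ℝ := fun s => d s ^ (2 + a) with hfdef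
  set g : ℝ → ℝ := fun s => f s + (2 + a) * C₁ * s with hgdef
  have hfc : ContinuousOn f (Set.Icc (τ - δ) τ) :=
    hcont.rpow_const (fun x _ => Or.inr hb.le)
  have hgc : ContinuousOn g (Set.Icc (τ - δ) τ) :=
    hfc.add ((continuous_const.mul continuous_id).continuousOn)
  have key : ∀ s ∈ Set.Ioo (τ - δ) τ,
      HasDerivAt g ((2 + a) * d s ^ (2 + a - 1) * deriv d s + (2 + a) * C₁) s := by
    intro s hs
    have h1 : HasDerivAt f ((2 + a) * d s ^ (2 + a - 1) * deriv d s) s := by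
      have h := (hdiff s hs).hasDerivAt.rpow_const (p := 2 + a) (Or.inr (by linarith))
      convert h using 1
      ring
    have h2 : HasDerivAt (fun s : ℝ => (2 + a) * C₁ * s) ((2 + a) * C₁) s := by
      simpa using (hasDerivAt_id s).const_mul ((2 + a) * C₁)
    have h3 := h1.add h2
    exact h3
  have hderiv_nonneg : ∀ s ∈ Set.Ioo (τ - δ) τ,
      0 ≤ (2 + a) * d s ^ (2 + a - 1) * deriv d s + (2 + a) * C₁ := by
    intro s hs
    have hds : 0 < d s := hpos s ⟨hs.1.le, hs.2⟩
    have hpow : 0 < d s ^ (2 + a - 1) := Real.rpow_pos_of_pos hds _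
    have hmul : (2 + a) * d s ^ (2 + a - 1) * (-C₁ * d s ^ (-(1 + a)))
        ≤ (2 + a) * d s ^ (2 + a - 1) * deriv d s :=
      mul_le_mul_of_nonneg_left (hineq s hs) (by positivity)
    have hcancel : d s ^ (2 + a - 1) * d s ^ (-(1 + a)) = 1 := by
      rw [← Real.rpow_add hds]
      have : 2 + a - 1 + -(1 + a) = 0 := by ring
      rw [this, Real.rpow_zero]
    have hL : (2 + a) * d s ^ (2 + a - 1) * (-C₁ * d s ^ (-(1 + a)))
        = -((2 + a) * C₁) := by
      calc (2 + a) * d s ^ (2 + a - 1) * (-C₁ * d s ^ (-(1 + a)))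
          = -((2 + a) * C₁) * (d s ^ (2 + a - 1) * d s ^ (-(1 + a))) := by ring
        _ = -((2 + a) * C₁) := by rw [hcancel, mul_one]
    linarith [hmul, hL.symm.le]
  have hmono : MonotoneOn g (Set.Icc (τ - δ) τ) := by
    apply monotoneOn_of_deriv_nonneg (convex_Icc _ _) hgc
    · intro s hs
      rw [interior_Icc] at hs
      exact (key s hs).differentiableAt.differentiableWithinAt
    · intro s hs
      rw [interior_Icc] at hs
      rw [(key s hs).deriv]
      exact hderiv_nonneg s hs
  have hτ : τ ∈ Set.Icc (τ - δ) τ := ⟨by linarith, le_rfl⟩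
  have hle : g t ≤ g τ := hmono ht hτ ht.2
  have hfτ : f τ = 0 := by
    simp [hfdef, hzero, Real.zero_rpow hb.ne']
  have hft : f t ≤ (2 + a) * C₁ * (τ - t) := by
    simp only [hgdef, hfτ] at hle
    nlinarith [hle]
  have hdt : d t = (f t) ^ ((1:ℝ) / (2 + a)) := by
    rw [hfdef]
    rw [← Real.rpow_mul (hd_nonneg t ht), mul_one_div_cancel hb.ne', Real.rpow_one]
  rw [hdt]
  exact Real.rpow_le_rpow (Real.rpow_nonneg (hd_nonneg t ht) _) hft
    (by positivity)
end

section
/- Let k ≥ 1 be an integer and let f : (0,1) → ℝ be k times continuously differentiable. If the function x ↦ x^k f^{(k)}(x) is Lebesgue integrable on (0,1), then: (a) for every ℓ ∈ {0, 1, …, k−1} the function x ↦ x^ℓ f^{(ℓ)}(x) is Lebesgue integrable on (0,1); and (b) for every ℓ ∈ {1, …, k} one has x^ℓ f^{(ℓ−1)}(x) → 0 as x → 0⁺. -/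
open scoped Topology
open Set MeasureTheory Filter intervalIntegral

lemma stmt4_aux (n : ℕ) (g g' : ℝ → ℝ)
    (hg : ∀ x ∈ Set.Ioo (0:ℝ) 1, HasDerivAt g (g' x) x)
    (hc' : ContinuousOn g' (Set.Ioo 0 1))
    (hint : MeasureTheory.IntegrableOn (fun x : ℝ => x ^ (n+1) * g' x) (Set.Ioo 0 1)) :
    MeasureTheory.IntegrableOn (fun x : ℝ => x ^ n * g x) (Set.Ioo 0 1) ∧
      Filter.Tendsto (fun x : ℝ => x ^ (n+1) * g x) (nhdsWithin 0 (Set.Ioi 0)) (nhds 0) := by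
  set c : ℝ := 1/2 with hcdef
  have hc : c ∈ Ioo (0:ℝ) 1 := by norm_num [hcdef]
  have hgc : ContinuousOn g (Ioo 0 1) := fun x hx => ((hg x hx).continuousAt).continuousWithinAt
  set ψ : ℝ → ℝ := fun t => t ^ (n+1) * |g' t| with hψdef
  have hψcont : ContinuousOn ψ (Ioo 0 1) := ((continuous_pow (n+1)).continuousOn).mul hc'.abs
  have habs : IntegrableOn ψ (Ioo 0 1) := by
    refine MeasureTheory.IntegrableOn.congr_fun hint.norm (fun x hx => ?_) measurableSet_Ioo
    simp [hψdef, abs_mul, abs_pow, abs_of_pos hx.1]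
  have hψnonneg : ∀ t : ℝ, 0 < t → 0 ≤ ψ t := fun t ht => by positivity
  set D : ℝ := ∫ x in Ioo (0:ℝ) 1, ψ x with hDdef
  have htail : ∀ a b : ℝ, 0 < a → b < 1 → ∫ t in Ioc a b, ψ t ≤ D := by
    intro a b ha hb
    refine setIntegral_mono_set habs ?_ ?_
    · exact (ae_restrict_iff' measurableSet_Ioo).2 (ae_of_all _ fun x hx => hψnonneg x hx.1)
    · exact HasSubset.Subset.eventuallyLE (fun t ht => ⟨lt_of_lt_of_le ha ht.1.le, lt_of_le_of_lt ht.2 hb⟩)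
  have hord : Set.OrdConnected (Ioo (0:ℝ) 1) := Set.ordConnected_Ioo
  have hsub : ∀ x ∈ Ioo (0:ℝ) 1, uIcc x c ⊆ Ioo 0 1 := fun x hx => hord.uIcc_subset hx hc
  have hii : ∀ x ∈ Ioo (0:ℝ) 1, IntervalIntegrable g' volume x c :=
    fun x hx => (hc'.mono (hsub x hx)).intervalIntegrable
  have hiiabs : ∀ x ∈ Ioo (0:ℝ) 1, IntervalIntegrable (fun t => |g' t|) volume x c :=
    fun x hx => ((hc'.abs).mono (hsub x hx)).intervalIntegrable
  have hftc : ∀ x ∈ Ioo (0:ℝ) 1, ∫ t in x..c, g' t = g c - g x :=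
    fun x hx => integral_eq_sub_of_hasDerivAt (fun t ht => hg t (hsub x hx ht)) (hii x hx)
  have hbound : ∀ x ∈ Ioo (0:ℝ) 1, |g x| ≤ |g c| + |(∫ t in x..c, |g' t|)| := by
    intro x hx
    have h1 : |g x| ≤ |g c| + |g c - g x| := by
      have := abs_sub_abs_le_abs_sub (g x) (g c)
      rw [abs_sub_comm] at this; linarith
    have h2 : |g c - g x| ≤ |(∫ t in x..c, |g' t|)| := by
      rw [← hftc x hx]
      simpa [Real.norm_eq_abs] using intervalIntegral.norm_integral_le_abs_integral_norm
        (f := g') (a := x) (b := c) (μ := volume)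
    linarith
  -- the function G x = ∫_x^c |g'|
  set G : ℝ → ℝ := fun x => ∫ t in x..c, |g' t| with hGdef
  have hGderiv : ∀ x ∈ Ioo (0:ℝ) 1, HasDerivAt G (-|g' x|) x := by
    intro x hx
    have hmeas : StronglyMeasurableAtFilter (fun t => |g' t|) (𝓝 x) :=
      ContinuousOn.stronglyMeasurableAtFilter isOpen_Ioo hc'.abs x hx
    have hca : ContinuousAt (fun t => |g' t|) x :=
      (hc'.abs).continuousAt (isOpen_Ioo.mem_nhds hx)
    have h1 : HasDerivAt (fun u => ∫ t in c..u, |g' t|) (|g' x|) x := by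
      refine integral_hasDerivAt_right ?_ hmeas hca
      have := hiiabs x hx; exact this.symm
    have h2 : G = fun u => -∫ t in c..u, |g' t| :=
      funext fun u => intervalIntegral.integral_symm c u
    rw [h2]; exact h1.neg
  have hGcont : ContinuousOn G (Ioo 0 1) :=
    fun x hx => ((hGderiv x hx).continuousAt).continuousWithinAt
  have hGnonneg : ∀ x : ℝ, x ≤ c → 0 ≤ G x := by
    intro x hx
    exact intervalIntegral.integral_nonneg hx (fun t _ => abs_nonneg _)
  have hm : ((n:ℝ)+1) ≠ 0 := by positivity
  have hmpos : (0:ℝ) < (n:ℝ)+1 := by positivity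
  set Φ : ℝ → ℝ := fun x => x ^ (n+1) * G x / ((n:ℝ)+1) with hΦdef
  have hΦderiv : ∀ x ∈ Ioo (0:ℝ) 1,
      HasDerivAt Φ (x ^ n * G x - x ^ (n+1) * |g' x| / ((n:ℝ)+1)) x := by
    intro x hx
    have h1 := ((hasDerivAt_pow (n+1) x).mul (hGderiv x hx)).div_const ((n:ℝ)+1)
    have h2 : (↑(n+1) * x ^ (n + 1 - 1) * G x + x ^ (n+1) * -|g' x|) / ((n:ℝ)+1)
        = x ^ n * G x - x ^ (n+1) * |g' x| / ((n:ℝ)+1) := by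
      push_cast [Nat.add_sub_cancel]
      field_simp
      ring
    rw [h2] at h1; exact h1
  -- uniform bound of ∫_ε^c x^n G x
  have hIG : ∀ ε ∈ Ioo (0:ℝ) c, ∫ x in ε..c, x ^ n * G x ≤ D / ((n:ℝ)+1) := by
    intro ε hε
    have hεc : ε ≤ c := hε.2.le
    have hIcc : Icc ε c ⊆ Ioo (0:ℝ) 1 := fun t ht =>
      ⟨lt_of_lt_of_le hε.1 ht.1, lt_of_le_of_lt ht.2 hc.2⟩
    have huIcc : uIcc ε c ⊆ Ioo (0:ℝ) 1 := by rwa [uIcc_of_le hεc]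
    have i1 : IntervalIntegrable (fun x => x ^ n * G x) volume ε c :=
      (((continuous_pow n).continuousOn).mul (hGcont.mono huIcc)).intervalIntegrable
    have i2 : IntervalIntegrable (fun x => x ^ (n+1) * |g' x| / ((n:ℝ)+1)) volume ε c :=
      ((((continuous_pow (n+1)).continuousOn).mul ((hc'.abs).mono huIcc)).div_const _).intervalIntegrable
    have hFTC : ∫ x in ε..c, (x ^ n * G x - x ^ (n+1) * |g' x| / ((n:ℝ)+1)) = Φ c - Φ ε :=
      integral_eq_sub_of_hasDerivAt (fun t ht => hΦderiv t (huIcc ht)) (i1.sub i2)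
    rw [intervalIntegral.integral_sub i1 i2] at hFTC
    have hΦc : Φ c = 0 := by simp [hΦdef, hGdef]
    have hΦε : 0 ≤ Φ ε := by
      have h3 := hGnonneg ε hεc
      have h4 : (0:ℝ) ≤ ε ^ (n+1) := pow_nonneg hε.1.le _
      exact div_nonneg (mul_nonneg h4 h3) hmpos.le
    have hI2 : ∫ x in ε..c, x ^ (n+1) * |g' x| / ((n:ℝ)+1) ≤ D / ((n:ℝ)+1) := by
      rw [intervalIntegral.integral_div]
      refine div_le_div_of_nonneg_right ?_ hmpos.le
      have he1 : ∫ x in ε..c, x ^ (n+1) * |g' x| = ∫ x in Ioc ε c, ψ x := by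
        rw [intervalIntegral.integral_of_le hεc]
      rw [he1]
      exact htail ε c hε.1 hc.2
    linarith
  -- uniform bound on the integral of the norm over (ε, c]
  have hnormbd : ∀ ε ∈ Ioo (0:ℝ) c,
      ∫ x in Ioc ε c, ‖x ^ n * g x‖ ≤ |g c| + D / ((n:ℝ)+1) := by
    intro ε hε
    have hεc : ε ≤ c := hε.2.le
    have hIcc : Icc ε c ⊆ Ioo (0:ℝ) 1 := fun t ht =>
      ⟨lt_of_lt_of_le hε.1 ht.1, lt_of_le_of_lt ht.2 hc.2⟩
    have if0 : IntegrableOn (fun x => x ^ n * g x) (Ioc ε c) :=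
      ((((continuous_pow n).continuousOn).mul (hgc.mono hIcc)).integrableOn_Icc).mono_set
        Ioc_subset_Icc_self
    have i1 : IntegrableOn (fun x : ℝ => x ^ n * |g c|) (Ioc ε c) :=
      ((((continuous_pow n).continuousOn).mul continuousOn_const).integrableOn_Icc).mono_set
        Ioc_subset_Icc_self
    have i2 : IntegrableOn (fun x => x ^ n * G x) (Ioc ε c) :=
      ((((continuous_pow n).continuousOn).mul (hGcont.mono hIcc)).integrableOn_Icc).mono_set
        Ioc_subset_Icc_self
    have hmono : ∫ x in Ioc ε c, ‖x ^ n * g x‖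
        ≤ ∫ x in Ioc ε c, (x ^ n * |g c| + x ^ n * G x) := by
      refine setIntegral_mono_on if0.norm (i1.add i2) measurableSet_Ioc ?_
      intro x hx
      have hx0 : (0:ℝ) < x := lt_trans hε.1 hx.1
      have hx' : x ∈ Ioo (0:ℝ) 1 := ⟨hx0, lt_of_le_of_lt hx.2 hc.2⟩
      have h1 : ‖x ^ n * g x‖ = x ^ n * |g x| := by
        rw [Real.norm_eq_abs, abs_mul, abs_pow, abs_of_pos hx0]
      have h2 := hbound x hx'
      have h3 : |(∫ t in x..c, |g' t|)| = G x := abs_of_nonneg (hGnonneg x hx.2)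
      rw [h3] at h2
      rw [h1, ← mul_add]
      exact mul_le_mul_of_nonneg_left h2 (pow_nonneg hx0.le n)
    have hsplit : ∫ x in Ioc ε c, (x ^ n * |g c| + x ^ n * G x)
        = (∫ x in Ioc ε c, x ^ n * |g c|) + ∫ x in Ioc ε c, x ^ n * G x :=
      MeasureTheory.integral_add i1 i2
    have h4 : ∫ x in Ioc ε c, x ^ n * |g c| ≤ |g c| := by
      have hb : ∀ x ∈ Ioc ε c, x ^ n * |g c| ≤ |g c| := by
        intro x hx
        have hx0 : (0:ℝ) < x := lt_trans hε.1 hx.1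
        have : x ^ n ≤ 1 := pow_le_one₀ hx0.le (le_trans hx.2 hc.2.le)
        calc x ^ n * |g c| ≤ 1 * |g c| :=
              mul_le_mul_of_nonneg_right this (abs_nonneg _)
          _ = |g c| := one_mul _
      calc ∫ x in Ioc ε c, x ^ n * |g c| ≤ ∫ _x in Ioc ε c, |g c| :=
            setIntegral_mono_on i1 (integrableOn_const measure_Ioc_lt_top.ne)
              measurableSet_Ioc hb
        _ = (volume (Ioc ε c)).toReal * |g c| := by rw [setIntegral_const, smul_eq_mul]; rfl
        _ ≤ 1 * |g c| := by
            refine mul_le_mul_of_nonneg_right ?_ (abs_nonneg _)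
            rw [Real.volume_Ioc, ENNReal.toReal_ofReal (by linarith)]
            rw [hcdef] at hεc ⊢; linarith [hε.1]
        _ = |g c| := one_mul _
    have h5 : ∫ x in Ioc ε c, x ^ n * G x ≤ D / ((n:ℝ)+1) := by
      rw [← intervalIntegral.integral_of_le hεc]
      exact hIG ε hε
    linarith
  -- integrability on (0, c]
  have hnear0 : IntegrableOn (fun x => x ^ n * g x) (Ioc 0 c) := by
    have hai : ∀ i : ℕ, c / ((i:ℝ) + 2) ∈ Ioo (0:ℝ) c := by
      intro i
      have h2 : (1:ℝ) < (i:ℝ) + 2 := by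
        have := Nat.cast_nonneg (α := ℝ) i; linarith
      exact ⟨div_pos hc.1 (by linarith), div_lt_self hc.1 h2⟩
    refine integrableOn_Ioc_of_intervalIntegral_norm_bounded_left
      (a := fun i : ℕ => c / ((i:ℝ) + 2)) (l := atTop) (I := |g c| + D / ((n:ℝ)+1))
      (fun i => ?_) ?_ ?_
    · have hIcc : Icc (c / ((i:ℝ)+2)) c ⊆ Ioo (0:ℝ) 1 := fun t ht =>
        ⟨lt_of_lt_of_le (hai i).1 ht.1, lt_of_le_of_lt ht.2 hc.2⟩
      exact ((((continuous_pow n).continuousOn).mul (hgc.mono hIcc)).integrableOn_Icc).mono_set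
        Ioc_subset_Icc_self
    · have h0 := (tendsto_const_div_atTop_nhds_zero_nat c).comp (tendsto_add_atTop_nat 2)
      refine h0.congr fun i => ?_
      simp only [Function.comp_apply]; push_cast; ring
    · exact Eventually.of_forall fun i => hnormbd _ (hai i)
  -- integrability on (c, 1)
  have hcsub : Ioo c 1 ⊆ Ioo (0:ℝ) 1 := fun t ht => ⟨lt_trans hc.1 ht.1, ht.2⟩
  have hg'i : IntegrableOn (fun t => |g' t|) (Ioo c 1) := by
    refine Integrable.mono' ((hint.mono_set hcsub).norm.const_mul ((2:ℝ)^(n+1)))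
      (((hc'.mono hcsub).abs).aestronglyMeasurable measurableSet_Ioo) ?_
    refine (ae_restrict_iff' measurableSet_Ioo).2 (ae_of_all _ fun x hx => ?_)
    have hx0 : (0:ℝ) < x := lt_trans hc.1 hx.1
    have h2 : ‖x ^ (n+1) * g' x‖ = x ^ (n+1) * |g' x| := by
      rw [Real.norm_eq_abs, abs_mul, abs_pow, abs_of_pos hx0]
    have h3 : (1:ℝ) ≤ (2*x) ^ (n+1) := by
      refine one_le_pow₀ ?_
      rw [hcdef] at hx; linarith [hx.1]
    calc ‖|g' x|‖ = 1 * |g' x| := by rw [norm_abs_eq_norm, Real.norm_eq_abs, one_mul]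
      _ ≤ (2*x) ^ (n+1) * |g' x| := mul_le_mul_of_nonneg_right h3 (abs_nonneg _)
      _ = 2 ^ (n+1) * ‖x ^ (n+1) * g' x‖ := by rw [h2, mul_pow]; ring
  have hKbd : ∀ x ∈ Ioo c 1, ‖x ^ n * g x‖ ≤ |g c| + ∫ t in Ioo c 1, |g' t| := by
    intro x hx
    have hx' : x ∈ Ioo (0:ℝ) 1 := hcsub hx
    have h2 := hbound x hx'
    have h3 : |(∫ t in x..c, |g' t|)| ≤ ∫ t in Ioo c 1, |g' t| := by
      rw [intervalIntegral.integral_symm c x, abs_neg,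
        intervalIntegral.integral_of_le hx.1.le]
      have hnn : 0 ≤ ∫ t in Ioc c x, |g' t| :=
        setIntegral_nonneg measurableSet_Ioc fun t _ => abs_nonneg _
      rw [abs_of_nonneg hnn]
      refine setIntegral_mono_set hg'i ?_ ?_
      · exact (ae_restrict_iff' measurableSet_Ioo).2 (ae_of_all _ fun t _ => abs_nonneg _)
      · exact HasSubset.Subset.eventuallyLE fun t ht => ⟨ht.1, lt_of_le_of_lt ht.2 hx.2⟩
    have h1 : ‖x ^ n * g x‖ = x ^ n * |g x| := by
      rw [Real.norm_eq_abs, abs_mul, abs_pow, abs_of_pos hx'.1]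
    have hxp : x ^ n ≤ 1 := pow_le_one₀ hx'.1.le hx'.2.le
    have hgnn : (0:ℝ) ≤ |g x| := abs_nonneg _
    calc ‖x ^ n * g x‖ = x ^ n * |g x| := h1
      _ ≤ 1 * |g x| := mul_le_mul_of_nonneg_right hxp hgnn
      _ = |g x| := one_mul _
      _ ≤ |g c| + |(∫ t in x..c, |g' t|)| := h2
      _ ≤ |g c| + ∫ t in Ioo c 1, |g' t| := by linarith
  have hfar : IntegrableOn (fun x => x ^ n * g x) (Ioo c 1) := by
    refine Integrable.mono' (integrableOn_const measure_Ioo_lt_top.ne)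
      ((((continuous_pow n).continuousOn).mul (hgc.mono hcsub)).aestronglyMeasurable
        measurableSet_Ioo)
      ((ae_restrict_iff' measurableSet_Ioo).2 (ae_of_all _ hKbd))
  have hpart1 : IntegrableOn (fun x => x ^ n * g x) (Ioo 0 1) := by
    refine (hnear0.union hfar).mono_set ?_
    intro x hx
    rcases le_or_gt x c with h | h
    · exact Or.inl ⟨hx.1, h⟩
    · exact Or.inr ⟨h, hx.2⟩
  refine ⟨hpart1, ?_⟩
  -- the primitive of ψ is continuous at 0
  have hψInt : IntegrableOn ψ (Icc 0 c) := by
    rw [integrableOn_Icc_iff_integrableOn_Ioc]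
    exact habs.mono_set fun t ht => ⟨ht.1, lt_of_le_of_lt ht.2 hc.2⟩
  have hP : ContinuousOn (fun u => ∫ t in Ioc 0 u, ψ t) (Icc 0 c) :=
    intervalIntegral.continuousOn_primitive hψInt
  have h0mem : (0:ℝ) ∈ Icc (0:ℝ) c := ⟨le_rfl, hc.1.le⟩
  have hP0 : Tendsto (fun u => ∫ t in Ioc 0 u, ψ t) (nhdsWithin 0 (Icc 0 c)) (𝓝 0) := by
    have h6 := hP 0 h0mem
    unfold ContinuousWithinAt at h6
    simpa [Ioc_self] using h6
  have hsqrt0 : Tendsto Real.sqrt (𝓝[>] (0:ℝ)) (𝓝 0) := by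
    have h7 := Real.continuous_sqrt.tendsto 0
    rw [Real.sqrt_zero] at h7
    exact h7.mono_left nhdsWithin_le_nhds
  have hc2pos : (0:ℝ) < c ^ 2 := by positivity
  have hmemIco : (0:ℝ) ∈ Ico (0:ℝ) (c^2) := ⟨le_rfl, hc2pos⟩
  have hsq : Tendsto Real.sqrt (𝓝[>] (0:ℝ)) (nhdsWithin 0 (Icc 0 c)) := by
    rw [tendsto_nhdsWithin_iff]
    refine ⟨hsqrt0, ?_⟩
    filter_upwards [Ioo_mem_nhdsGT_of_mem hmemIco] with x hx
    refine ⟨Real.sqrt_nonneg x, ?_⟩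
    have h8 := Real.sqrt_le_sqrt hx.2.le
    rwa [Real.sqrt_sq hc.1.le] at h8
  set bnd : ℝ → ℝ := fun x => x ^ (n+1) * |g c| + (∫ t in Ioc 0 (Real.sqrt x), ψ t)
      + Real.sqrt x ^ (n+1) * D with hbdef
  have hbt : Tendsto bnd (𝓝[>] (0:ℝ)) (𝓝 0) := by
    have t1 : Tendsto (fun x : ℝ => x ^ (n+1) * |g c|) (𝓝[>] (0:ℝ)) (𝓝 0) := by
      have h9 := ((continuous_pow (n+1)).mul continuous_const).tendsto (0:ℝ)
        (f := fun x : ℝ => x ^ (n+1) * |g c|)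
      simp only [zero_pow (Nat.succ_ne_zero n), zero_mul] at h9
      exact h9.mono_left nhdsWithin_le_nhds
    have t2 : Tendsto (fun x : ℝ => ∫ t in Ioc 0 (Real.sqrt x), ψ t) (𝓝[>] (0:ℝ)) (𝓝 0) :=
      hP0.comp hsq
    have t3 : Tendsto (fun x : ℝ => Real.sqrt x ^ (n+1) * D) (𝓝[>] (0:ℝ)) (𝓝 0) := by
      have h10 := (hsqrt0.pow (n+1)).mul_const D
      simpa [zero_pow (Nat.succ_ne_zero n)] using h10
    have h11 := (t1.add t2).add t3
    simpa using h11
  refine squeeze_zero_norm' ?_ hbt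
  filter_upwards [Ioo_mem_nhdsGT_of_mem hmemIco] with x hx
  have hx0 : 0 < x := hx.1
  have hxc2 : x < c^2 := hx.2
  have hx1 : x < 1 := lt_trans hxc2 (by rw [hcdef]; norm_num)
  have hx' : x ∈ Ioo (0:ℝ) 1 := ⟨hx0, hx1⟩
  have hs0 : 0 < Real.sqrt x := Real.sqrt_pos.2 hx0
  have hsc : Real.sqrt x ≤ c := by
    have h12 := Real.sqrt_le_sqrt hxc2.le
    rwa [Real.sqrt_sq hc.1.le] at h12
  have hs1 : Real.sqrt x < 1 := lt_of_le_of_lt hsc hc.2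
  have hxs : x ≤ Real.sqrt x := by
    nlinarith [Real.sq_sqrt hx0.le, Real.sqrt_nonneg x]
  have hxc : x ≤ c := le_trans hxs hsc
  have ia : IntervalIntegrable (fun t => |g' t|) volume x (Real.sqrt x) :=
    ((hc'.abs).mono (by
      rw [uIcc_of_le hxs]
      exact fun t ht => ⟨lt_of_lt_of_le hx0 ht.1, lt_of_le_of_lt ht.2 hs1⟩)).intervalIntegrable
  have ib : IntervalIntegrable (fun t => |g' t|) volume (Real.sqrt x) c :=
    ((hc'.abs).mono (by
      rw [uIcc_of_le hsc]
      exact fun t ht => ⟨lt_of_lt_of_le hs0 ht.1, lt_of_le_of_lt ht.2 hc.2⟩)).intervalIntegrable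
  have iψa : IntervalIntegrable ψ volume x (Real.sqrt x) :=
    (hψcont.mono (by
      rw [uIcc_of_le hxs]
      exact fun t ht => ⟨lt_of_lt_of_le hx0 ht.1, lt_of_le_of_lt ht.2 hs1⟩)).intervalIntegrable
  have iψb : IntervalIntegrable ψ volume (Real.sqrt x) c :=
    (hψcont.mono (by
      rw [uIcc_of_le hsc]
      exact fun t ht => ⟨lt_of_lt_of_le hs0 ht.1, lt_of_le_of_lt ht.2 hc.2⟩)).intervalIntegrable
  have hGsplit : G x = (∫ t in x..Real.sqrt x, |g' t|) + ∫ t in Real.sqrt x..c, |g' t| :=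
    (intervalIntegral.integral_add_adjacent_intervals ia ib).symm
  have hp1 : x ^ (n+1) * ∫ t in x..Real.sqrt x, |g' t| ≤ ∫ t in Ioc 0 (Real.sqrt x), ψ t := by
    rw [← intervalIntegral.integral_const_mul]
    have m1 : ∫ t in x..Real.sqrt x, x^(n+1) * |g' t| ≤ ∫ t in x..Real.sqrt x, ψ t := by
      refine intervalIntegral.integral_mono_on hxs (ia.const_mul _) iψa ?_
      intro t ht
      simp only [hψdef]
      exact mul_le_mul_of_nonneg_right (pow_le_pow_left₀ hx0.le ht.1 _) (abs_nonneg _)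
    have m2 : ∫ t in x..Real.sqrt x, ψ t ≤ ∫ t in Ioc 0 (Real.sqrt x), ψ t := by
      rw [intervalIntegral.integral_of_le hxs]
      refine setIntegral_mono_set
        (habs.mono_set fun t ht => ⟨ht.1, lt_of_le_of_lt ht.2 hs1⟩) ?_ ?_
      · exact (ae_restrict_iff' measurableSet_Ioc).2 (ae_of_all _ fun t ht => hψnonneg t ht.1)
      · exact HasSubset.Subset.eventuallyLE (Ioc_subset_Ioc_left hx0.le)
    linarith
  have hp2 : x ^ (n+1) * ∫ t in Real.sqrt x..c, |g' t| ≤ Real.sqrt x ^ (n+1) * D := by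
    rw [← intervalIntegral.integral_const_mul]
    have m1 : ∫ t in Real.sqrt x..c, x^(n+1) * |g' t|
        ≤ ∫ t in Real.sqrt x..c, Real.sqrt x ^ (n+1) * ψ t := by
      refine intervalIntegral.integral_mono_on hsc (ib.const_mul _) (iψb.const_mul _) ?_
      intro t ht
      have h5 : x ^ (n+1) ≤ (Real.sqrt x * t) ^ (n+1) := by
        refine pow_le_pow_left₀ hx0.le ?_ _
        calc x = Real.sqrt x * Real.sqrt x := (Real.mul_self_sqrt hx0.le).symm
          _ ≤ Real.sqrt x * t := mul_le_mul_of_nonneg_left ht.1 (Real.sqrt_nonneg x)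
      calc x^(n+1) * |g' t| ≤ (Real.sqrt x * t)^(n+1) * |g' t| :=
            mul_le_mul_of_nonneg_right h5 (abs_nonneg _)
        _ = Real.sqrt x ^ (n+1) * ψ t := by simp only [hψdef]; rw [mul_pow]; ring
    have m2 : ∫ t in Real.sqrt x..c, Real.sqrt x ^ (n+1) * ψ t ≤ Real.sqrt x ^ (n+1) * D := by
      rw [intervalIntegral.integral_const_mul]
      refine mul_le_mul_of_nonneg_left ?_ (pow_nonneg (Real.sqrt_nonneg x) _)
      rw [intervalIntegral.integral_of_le hsc]
      exact htail _ _ hs0 hc.2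
    linarith
  have hb2 := hbound x hx'
  have h3 : |(∫ t in x..c, |g' t|)| = G x := abs_of_nonneg (hGnonneg x hxc)
  rw [h3] at hb2
  have hnorm : ‖x ^ (n+1) * g x‖ = x^(n+1) * |g x| := by
    rw [Real.norm_eq_abs, abs_mul, abs_pow, abs_of_pos hx0]
  rw [hnorm]
  have hxpw : (0:ℝ) ≤ x^(n+1) := pow_nonneg hx0.le _
  have k1 : x^(n+1) * |g x| ≤ x^(n+1)*|g c| + x^(n+1)*G x := by
    have := mul_le_mul_of_nonneg_left hb2 hxpw
    rw [mul_add] at this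
    exact this
  rw [hGsplit, mul_add] at k1
  simp only [hbdef]
  linarith

/-- Lemma 3.1 (singularity control at 0): if `f` is `C^k` on `(0,1)` (encoded via the family
`F` of successive derivatives, `F 0 = f`) and `x ↦ x^k f^{(k)}(x)` is integrable on `(0,1)`,
then `x ↦ x^ℓ f^{(ℓ)}(x)` is integrable on `(0,1)` for `0 ≤ ℓ ≤ k-1`, and
`x^ℓ f^{(ℓ-1)}(x) → 0` as `x → 0⁺` for `1 ≤ ℓ ≤ k`. -/
theorem stmt4 (k : ℕ) (hk : 1 ≤ k) (f : ℝ → ℝ) (F : ℕ → ℝ → ℝ)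
    (hF0 : F 0 = f)
    (hderiv : ∀ ℓ < k, ∀ x ∈ Set.Ioo (0 : ℝ) 1, HasDerivAt (F ℓ) (F (ℓ + 1) x) x)
    (hcont : ContinuousOn (F k) (Set.Ioo (0 : ℝ) 1))
    (hint : MeasureTheory.IntegrableOn (fun x : ℝ => x ^ k * F k x) (Set.Ioo 0 1)) :
    (∀ ℓ < k, MeasureTheory.IntegrableOn (fun x : ℝ => x ^ ℓ * F ℓ x) (Set.Ioo 0 1)) ∧
    (∀ ℓ : ℕ, 1 ≤ ℓ → ℓ ≤ k →
      Filter.Tendsto (fun x : ℝ => x ^ ℓ * F (ℓ - 1) x)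
        (nhdsWithin 0 (Set.Ioi 0)) (nhds 0)) := by
  have hFc : ∀ ℓ, ℓ ≤ k → ContinuousOn (F ℓ) (Set.Ioo 0 1) := by
    intro ℓ hℓ
    rcases eq_or_lt_of_le hℓ with h | h
    · rw [h]; exact hcont
    · exact fun x hx => ((hderiv ℓ h x hx).continuousAt).continuousWithinAt
  have key : ∀ j, j ≤ k →
      MeasureTheory.IntegrableOn (fun x : ℝ => x ^ (k - j) * F (k - j) x) (Set.Ioo 0 1) ∧
      (0 < j → Filter.Tendsto (fun x : ℝ => x ^ (k - j + 1) * F (k - j) x)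
        (nhdsWithin 0 (Set.Ioi 0)) (nhds 0)) := by
    intro j
    induction j with
    | zero => intro _; exact ⟨by simpa using hint, fun h => absurd h (lt_irrefl 0)⟩
    | succ j ih =>
      intro hj
      have hjk : j < k := hj
      have e : k - (j+1) + 1 = k - j := by omega
      have e2 : k - (j+1) < k := by omega
      have h1 := (ih hjk.le).1
      have haux := stmt4_aux (k - (j+1)) (F (k - (j+1))) (F (k - j))
        (by
          intro x hx
          have h2 := hderiv (k - (j+1)) e2 x hx
          rwa [e] at h2)
        (hFc (k - j) (Nat.sub_le _ _))
        (by simp only [e]; exact h1)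
      exact ⟨haux.1, fun _ => haux.2⟩
  constructor
  · intro ℓ hℓ
    have h1 := (key (k - ℓ) (Nat.sub_le _ _)).1
    have e : k - (k - ℓ) = ℓ := by omega
    rwa [e] at h1
  · intro ℓ h1 h2
    have h3 := (key (k - (ℓ - 1)) (Nat.sub_le _ _)).2 (by omega)
    have e : k - (k - (ℓ - 1)) = ℓ - 1 := by omega
    have e2 : ℓ - 1 + 1 = ℓ := by omega
    rw [e, e2] at h3
    exact h3
end

section
/- Let k ≥ 1 be an integer and let f : (1,∞) → ℝ be k times continuously differentiable such that f^{(ℓ)} is Lebesgue integrable on (1,∞) for every ℓ ∈ {0, 1, …, k}. If the function x ↦ x^k f^{(k)}(x) is Lebesgue integrable on (1,∞), then: (a) for every ℓ ∈ {0, 1, …, k−1} the function x ↦ x^ℓ f^{(ℓ)}(x) is Lebesgue integrable on (1,∞); and (b) for every ℓ ∈ {1, …, k} one has x^ℓ f^{(ℓ−1)}(x) → 0 as x → ∞. -/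
open MeasureTheory Set Filter intervalIntegral


-- limit of an integrable function at infinity must be 0
lemma aux_limit_zero {g : ℝ → ℝ} {L : ℝ} (hg : IntegrableOn g (Set.Ioi 1))
    (h : Tendsto g atTop (nhds L)) : L = 0 := by
  by_contra hL
  have hnorm : Tendsto (fun x => ‖g x‖) atTop (nhds ‖L‖) := h.norm
  have hev : ∀ᶠ x : ℝ in atTop, ‖L‖ / 2 ≤ ‖g x‖ := by
    have : ∀ᶠ x : ℝ in atTop, ‖g x‖ ∈ Set.Ioi (‖L‖ / 2) :=
      hnorm.eventually_mem (Ioi_mem_nhds (by have := norm_pos_iff.mpr hL; linarith))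
    exact this.mono fun x hx => le_of_lt hx
  obtain ⟨M, hM⟩ := (hev.and (eventually_ge_atTop (2 : ℝ))).exists_forall_of_atTop
  have hMint : IntegrableOn g (Set.Ioi M) := by
    apply hg.mono_set
    intro x hx
    have := (hM M le_rfl).2
    exact show (1:ℝ) < x from lt_of_lt_of_le (by linarith) (le_of_lt (show M < x from hx))
  have hconst : IntegrableOn (fun _ : ℝ => ‖L‖ / 2) (Set.Ioi M) := by
    apply Integrable.mono' hMint.norm aestronglyMeasurable_const
    apply (ae_restrict_iff' measurableSet_Ioi).mpr
    apply ae_of_all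
    intro x hx
    have := (hM x (le_of_lt hx)).1
    simpa [abs_of_nonneg (by positivity : (0:ℝ) ≤ ‖L‖ / 2)] using this
  have := (integrable_const_iff (c := ‖L‖ / 2)).mp hconst
  rcases this with h0 | hfin
  · exact hL (by simpa using norm_eq_zero.mp (by linarith [div_eq_zero_iff.mp h0] : ‖L‖ = 0))
  · rw [isFiniteMeasure_restrict] at hfin
    simp [Real.volume_Ioi] at hfin

-- tail integral identity
lemma aux_tail_eq {q : ℝ → ℝ} {a x : ℝ} (hq : IntegrableOn q (Set.Ioi a))
    (hx : a ≤ x) :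
    ∫ t in Set.Ioi x, q t = (∫ t in Set.Ioi a, q t) - ∫ t in a..x, q t := by
  have hsplit : Set.Ioc a x ∪ Set.Ioi x = Set.Ioi a := Ioc_union_Ioi_eq_Ioi hx
  have h1 : IntegrableOn q (Set.Ioc a x) := hq.mono_set (by rw [← hsplit]; exact subset_union_left)
  have h2 : IntegrableOn q (Set.Ioi x) := hq.mono_set (by rw [← hsplit]; exact subset_union_right)
  have hdisj : Disjoint (Set.Ioc a x) (Set.Ioi x) := Ioc_disjoint_Ioi le_rfl
  have := setIntegral_union hdisj measurableSet_Ioi h1 h2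
  rw [hsplit] at this
  rw [intervalIntegral.integral_of_le hx]
  linarith

-- tail of an integrable function tends to zero
lemma aux_tail_tendsto {q : ℝ → ℝ} (hq : IntegrableOn q (Set.Ioi 1)) :
    Tendsto (fun x => ∫ t in Set.Ioi x, q t) atTop (nhds 0) := by
  have h1 : Tendsto (fun x => ∫ t in (1:ℝ)..x, q t) atTop (nhds (∫ t in Set.Ioi 1, q t)) :=
    intervalIntegral_tendsto_integral_Ioi 1 hq tendsto_id
  have h2 : Tendsto (fun x => (∫ t in Set.Ioi 1, q t) - ∫ t in (1:ℝ)..x, q t) atTop (nhds 0) := by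
    have := (tendsto_const_nhds (x := ∫ t in Set.Ioi 1, q t) (f := atTop)).sub h1
    simpa using this
  apply h2.congr'
  filter_upwards [eventually_ge_atTop (1:ℝ)] with x hx
  exact (aux_tail_eq hq hx).symm

-- representation of g as minus the tail integral of its derivative
lemma aux_rep {g g' : ℝ → ℝ} (hd : ∀ x ∈ Set.Ioi (1:ℝ), HasDerivAt g (g' x) x)
    (hg : IntegrableOn g (Set.Ioi 1)) (hg' : IntegrableOn g' (Set.Ioi 1))
    {x : ℝ} (hx : x ∈ Set.Ioi (1:ℝ)) :
    g x = - ∫ t in Set.Ioi x, g' t := by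
  have hx1 : (1:ℝ) < x := hx
  have hftc : ∀ y, x ≤ y → g y = g x + ∫ t in x..y, g' t := by
    intro y hy
    have h1 : ∀ t ∈ Set.uIcc x y, HasDerivAt g (g' t) t := by
      intro t ht
      rw [Set.uIcc_of_le hy] at ht
      exact hd t (lt_of_lt_of_le hx1 ht.1)
    have h2 : IntervalIntegrable g' volume x y := by
      rw [intervalIntegrable_iff]
      apply hg'.mono_set
      rw [Set.uIoc_of_le hy]
      intro t ht
      exact lt_trans hx1 ht.1
    have := intervalIntegral.integral_eq_sub_of_hasDerivAt h1 h2
    rw [this]; ring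
  have hlim : Tendsto g atTop (nhds (g x + ∫ t in Set.Ioi x, g' t)) := by
    have h3 : IntegrableOn g' (Set.Ioi x) := hg'.mono_set (Ioi_subset_Ioi (le_of_lt hx1))
    have h4 : Tendsto (fun y => ∫ t in x..y, g' t) atTop (nhds (∫ t in Set.Ioi x, g' t)) :=
      intervalIntegral_tendsto_integral_Ioi x h3 tendsto_id
    have h5 := (tendsto_const_nhds (x := g x) (f := atTop)).add h4
    apply h5.congr'
    filter_upwards [eventually_ge_atTop x] with y hy
    exact (hftc y hy).symm
  have := aux_limit_zero hg hlim
  linarith [this]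

-- the master pointwise bound
lemma aux_bound {g g' : ℝ → ℝ} (m : ℕ) (hd : ∀ x ∈ Set.Ioi (1:ℝ), HasDerivAt g (g' x) x)
    (hg : IntegrableOn g (Set.Ioi 1)) (hg' : IntegrableOn g' (Set.Ioi 1))
    (hmg' : IntegrableOn (fun t => t ^ m * ‖g' t‖) (Set.Ioi 1))
    {x : ℝ} (hx : x ∈ Set.Ioi (1:ℝ)) :
    ‖x ^ m * g x‖ ≤ ∫ t in Set.Ioi x, t ^ m * ‖g' t‖ := by
  have hx1 : (1:ℝ) < x := hx
  have hx0 : (0:ℝ) < x := by linarith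
  have hrep := aux_rep hd hg hg' hx
  have hsub : Set.Ioi x ⊆ Set.Ioi (1:ℝ) := Ioi_subset_Ioi (le_of_lt hx1)
  have hg'x : IntegrableOn g' (Set.Ioi x) := hg'.mono_set hsub
  calc ‖x ^ m * g x‖ = x ^ m * ‖g x‖ := by
        rw [norm_mul, norm_pow, Real.norm_eq_abs, abs_of_pos hx0]
    _ = x ^ m * ‖∫ t in Set.Ioi x, g' t‖ := by rw [hrep, norm_neg]
    _ ≤ x ^ m * ∫ t in Set.Ioi x, ‖g' t‖ := by
        apply mul_le_mul_of_nonneg_left (MeasureTheory.norm_integral_le_integral_norm _) (by positivity)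
    _ = ∫ t in Set.Ioi x, x ^ m * ‖g' t‖ := by rw [MeasureTheory.integral_const_mul]
    _ ≤ ∫ t in Set.Ioi x, t ^ m * ‖g' t‖ := by
        apply setIntegral_mono_on (hg'x.norm.const_mul _) (hmg'.mono_set hsub) measurableSet_Ioi
        intro t ht
        apply mul_le_mul_of_nonneg_right _ (norm_nonneg _)
        exact pow_le_pow_left₀ (le_of_lt hx0) (le_of_lt ht) m

lemma aux_step {g g' : ℝ → ℝ} (m : ℕ)
    (hd : ∀ x ∈ Set.Ioi (1:ℝ), HasDerivAt g (g' x) x)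
    (hcg' : ContinuousOn g' (Set.Ioi 1))
    (hg : IntegrableOn g (Set.Ioi 1)) (hg' : IntegrableOn g' (Set.Ioi 1))
    (hm1 : IntegrableOn (fun t => t ^ (m+1) * g' t) (Set.Ioi 1)) :
    IntegrableOn (fun x => x ^ m * g x) (Set.Ioi 1) := by
  have hcg : ContinuousOn g (Set.Ioi 1) :=
    fun x hx => (hd x hx).continuousAt.continuousWithinAt
  set h : ℝ → ℝ := fun t => t ^ m * ‖g' t‖ with hh_def
  have hch : ContinuousOn h (Set.Ioi 1) := (continuous_pow m).continuousOn.mul hcg'.norm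
  have hm1norm : IntegrableOn (fun t => t ^ (m+1) * ‖g' t‖) (Set.Ioi 1) := by
    apply IntegrableOn.congr_fun hm1.norm _ measurableSet_Ioi
    intro t ht
    have ht0 : (0:ℝ) < t := lt_trans one_pos ht
    simp [norm_mul, abs_of_pos ht0]
  have hh : IntegrableOn h (Set.Ioi 1) := by
    apply Integrable.mono' hm1norm (hch.aestronglyMeasurable measurableSet_Ioi)
    apply (ae_restrict_iff' measurableSet_Ioi).mpr
    apply ae_of_all
    intro t ht
    have ht0 : (0:ℝ) < t := lt_trans one_pos ht
    have : ‖h t‖ = t ^ m * ‖g' t‖ := by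
      rw [hh_def]; simp [norm_mul, abs_of_pos ht0]
    rw [this, pow_succ]
    have ht1 : (1:ℝ) < t := ht
    have : t ^ m * ‖g' t‖ ≤ t ^ m * t * ‖g' t‖ := by
      nlinarith [mul_nonneg (mul_nonneg (le_of_lt (pow_pos ht0 m))
        (by linarith : (0:ℝ) ≤ t - 1)) (norm_nonneg (g' t))]
    linarith
  have hth : IntegrableOn (fun t => t * h t) (Set.Ioi 1) := by
    have heq : (fun t : ℝ => t ^ (m+1) * ‖g' t‖) = fun t => t * h t := by
      funext t; rw [hh_def]; ring
    rw [← heq]; exact hm1norm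
  set ψ : ℝ → ℝ := fun x => ∫ t in Set.Ioi x, h t with hψ_def
  have hbound : ∀ x ∈ Set.Ioi (1:ℝ), ‖x ^ m * g x‖ ≤ ψ x :=
    fun x hx => aux_bound m hd hg hg' hh hx
  set B : ℝ := ∫ t in Set.Ioi 1, t * h t with hB_def
  have hhpos : ∀ t ∈ Set.Ioi (1:ℝ), 0 ≤ h t := by
    intro t ht
    have ht0 : (0:ℝ) < t := lt_trans one_pos ht
    rw [hh_def]; positivity
  have hthpos : ∀ t ∈ Set.Ioi (1:ℝ), 0 ≤ t * h t := by
    intro t ht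
    exact mul_nonneg (le_of_lt (lt_trans one_pos ht)) (hhpos t ht)
  -- main interval bound
  have hmain : ∀ X : ℝ, 2 ≤ X → ∫ x in (2:ℝ)..X, ‖x ^ m * g x‖ ≤ 2 * B := by
    intro X hX
    -- derivative facts
    have hΦh : ∀ x ∈ Set.Ioi (1:ℝ), HasDerivAt (fun u => ∫ t in (2:ℝ)..u, h t) (h x) x := by
      intro x hx
      apply intervalIntegral.integral_hasDerivAt_right
      · rw [intervalIntegrable_iff]
        apply hh.mono_set
        intro t ht
        exact lt_of_le_of_lt (le_min one_le_two (le_of_lt hx)) ht.1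
      · exact AEStronglyMeasurable.stronglyMeasurableAtFilter_of_mem
          (hch.aestronglyMeasurable measurableSet_Ioi) (isOpen_Ioi.mem_nhds hx)
      · exact hch.continuousAt (isOpen_Ioi.mem_nhds hx)
    have hΦth : ∀ x ∈ Set.Ioi (1:ℝ), HasDerivAt (fun u => ∫ t in (2:ℝ)..u, t * h t)
        (x * h x) x := by
      intro x hx
      apply intervalIntegral.integral_hasDerivAt_right
      · rw [intervalIntegrable_iff]
        apply hth.mono_set
        intro t ht
        exact lt_of_le_of_lt (le_min one_le_two (le_of_lt hx)) ht.1
      · exact AEStronglyMeasurable.stronglyMeasurableAtFilter_of_mem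
          ((continuousOn_id.mul hch).aestronglyMeasurable measurableSet_Ioi)
          (isOpen_Ioi.mem_nhds hx)
      · exact (continuousOn_id.mul hch).continuousAt (isOpen_Ioi.mem_nhds hx)
    have hh2 : IntegrableOn h (Set.Ioi 2) := hh.mono_set (Set.Ioi_subset_Ioi one_le_two)
    have hψ_eq : ∀ x : ℝ, 2 ≤ x → ψ x = ψ 2 - ∫ t in (2:ℝ)..x, h t := by
      intro x hx
      exact aux_tail_eq hh2 hx
    set W : ℝ → ℝ := fun x => x * (ψ 2 - ∫ t in (2:ℝ)..x, h t) + ∫ t in (2:ℝ)..x, t * h t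
      with hW_def
    have hW : ∀ x ∈ Set.Ici (2:ℝ), HasDerivAt W (ψ x) x := by
      intro x hx
      have hx1 : x ∈ Set.Ioi (1:ℝ) := Set.mem_Ioi.mpr (lt_of_lt_of_le one_lt_two (Set.mem_Ici.mp hx))
      have d1 : HasDerivAt (fun u => u * (ψ 2 - ∫ t in (2:ℝ)..u, h t))
          (1 * (ψ 2 - ∫ t in (2:ℝ)..x, h t) + x * (0 - h x)) x :=
        (hasDerivAt_id x).mul ((hasDerivAt_const x (ψ 2)).sub (hΦh x hx1))
      have := d1.add (hΦth x hx1)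
      have heq : 1 * (ψ 2 - ∫ t in (2:ℝ)..x, h t) + x * (0 - h x) + x * h x = ψ x := by
        rw [hψ_eq x hx]; ring
      rw [heq] at this
      exact this
    have hψcont : ContinuousOn ψ (Set.Icc 2 X) := by
      apply ContinuousOn.congr (s := Set.Icc 2 X)
        (f := fun x => ψ 2 - ∫ t in (2:ℝ)..x, h t)
      · apply ContinuousOn.sub continuousOn_const
        intro x hx
        exact (hΦh x (lt_of_lt_of_le one_lt_two hx.1)).continuousAt.continuousWithinAt
      · intro x hx
        exact hψ_eq x hx.1
    have hψint : IntervalIntegrable ψ volume 2 X := by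
      apply ContinuousOn.intervalIntegrable
      rw [Set.uIcc_of_le hX]
      exact hψcont
    have hftc : ∫ x in (2:ℝ)..X, ψ x = W X - W 2 := by
      apply intervalIntegral.integral_eq_sub_of_hasDerivAt _ hψint
      intro t ht
      rw [Set.uIcc_of_le hX] at ht
      exact hW t ht.1
    have hW2 : W 2 = 2 * ψ 2 := by
      rw [hW_def]; simp
    have hWX : W X = X * ψ X + ∫ t in (2:ℝ)..X, t * h t := by
      rw [hW_def]
      rw [hψ_eq X hX]
    -- bound X * ψ X ≤ B
    have hXψ : X * ψ X ≤ B := by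
      have h1 : X * ψ X = ∫ t in Set.Ioi X, X * h t := by
        rw [hψ_def]; rw [MeasureTheory.integral_const_mul]
      have hsubX : Set.Ioi X ⊆ Set.Ioi (1:ℝ) := Set.Ioi_subset_Ioi (by linarith)
      have h2 : ∫ t in Set.Ioi X, X * h t ≤ ∫ t in Set.Ioi X, t * h t := by
        apply setIntegral_mono_on ((hh.mono_set hsubX).const_mul X)
          (hth.mono_set hsubX) measurableSet_Ioi
        intro t ht
        exact mul_le_mul_of_nonneg_right (le_of_lt ht) (hhpos t (hsubX ht))
      have h3 : ∫ t in Set.Ioi X, t * h t ≤ B := by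
        rw [hB_def]
        apply setIntegral_mono_set hth
        · apply (ae_restrict_iff' measurableSet_Ioi).mpr
          exact ae_of_all _ hthpos
        · exact HasSubset.Subset.eventuallyLE hsubX
      linarith
    have hΦthX : ∫ t in (2:ℝ)..X, t * h t ≤ B := by
      rw [intervalIntegral.integral_of_le hX, hB_def]
      apply setIntegral_mono_set hth
      · exact (ae_restrict_iff' measurableSet_Ioi).mpr (ae_of_all _ hthpos)
      · exact HasSubset.Subset.eventuallyLE
          (fun t ht => lt_trans one_lt_two ht.1)
    have hψ2 : 0 ≤ ψ 2 :=
      setIntegral_nonneg measurableSet_Ioi (fun t ht => hhpos t (Set.mem_Ioi.mpr (lt_trans one_lt_two (Set.mem_Ioi.mp ht))))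
    have hintψ : ∫ x in (2:ℝ)..X, ψ x ≤ 2 * B := by
      rw [hftc, hWX, hW2]; linarith
    have hsubIcc : Set.Icc (2:ℝ) X ⊆ Set.Ioi 1 :=
      fun x hx => lt_of_lt_of_le one_lt_two hx.1
    have hfcont : ContinuousOn (fun x : ℝ => ‖x ^ m * g x‖) (Set.Icc 2 X) :=
      ((continuous_pow m).continuousOn.mul (hcg.mono hsubIcc)).norm
    have hfint : IntervalIntegrable (fun x : ℝ => ‖x ^ m * g x‖) volume 2 X := by
      apply ContinuousOn.intervalIntegrable
      rw [Set.uIcc_of_le hX]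
      exact hfcont
    have hmono : ∫ x in (2:ℝ)..X, ‖x ^ m * g x‖ ≤ ∫ x in (2:ℝ)..X, ψ x := by
      apply intervalIntegral.integral_mono_on hX hfint hψint
      intro x hx
      exact hbound x (hsubIcc hx)
    linarith
  have h2i : IntegrableOn (fun x : ℝ => x ^ m * g x) (Set.Ioi 2) := by
    apply integrableOn_Ioi_of_intervalIntegral_norm_bounded (2 * B) 2
      (b := fun X : ℝ => X) (l := atTop) ?_ tendsto_id ?_
    · intro X
      rcases le_or_gt X 2 with hX2 | hX2
      · rw [Set.Ioc_eq_empty (not_lt.mpr hX2)]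
        exact integrableOn_empty
      · have hsubIcc : Set.Icc (2:ℝ) X ⊆ Set.Ioi 1 :=
          fun x hx => lt_of_lt_of_le one_lt_two hx.1
        exact (((continuous_pow m).continuousOn.mul
          (hcg.mono hsubIcc)).integrableOn_Icc).mono_set Set.Ioc_subset_Icc_self
    · filter_upwards [eventually_ge_atTop (2:ℝ)] with X hX
      exact hmain X hX
  have h12 : IntegrableOn (fun x : ℝ => x ^ m * g x) (Set.Ioc 1 2) := by
    have hsub : Set.Ioc (1:ℝ) 2 ⊆ Set.Ioi 1 := Set.Ioc_subset_Ioi_self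
    apply Integrable.mono' (((hg.mono_set hsub).norm).const_mul (2 ^ m))
      (((continuous_pow m).continuousOn.mul
        (hcg.mono hsub)).aestronglyMeasurable measurableSet_Ioc)
    apply (ae_restrict_iff' measurableSet_Ioc).mpr
    apply ae_of_all
    intro x hx
    have hx0 : (0:ℝ) < x := lt_trans one_pos hx.1
    simp only [Pi.mul_apply]
    rw [norm_mul, norm_pow, Real.norm_eq_abs, abs_of_pos hx0]
    exact mul_le_mul_of_nonneg_right
      (pow_le_pow_left₀ (le_of_lt hx0) hx.2 m) (norm_nonneg _)
  rw [← Set.Ioc_union_Ioi_eq_Ioi (one_le_two : (1:ℝ) ≤ 2)]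
  exact h12.union h2i



/-- Lemma 3.2 (tail control at infinity): if `f` is `C^k` on `(1,∞)` (encoded via the family
`F` of successive derivatives, `F 0 = f`) with `f^{(ℓ)}` integrable on `(1,∞)` for
`0 ≤ ℓ ≤ k`, and `x ↦ x^k f^{(k)}(x)` is integrable on `(1,∞)`, then
`x ↦ x^ℓ f^{(ℓ)}(x)` is integrable on `(1,∞)` for `0 ≤ ℓ ≤ k-1`, and
`x^ℓ f^{(ℓ-1)}(x) → 0` as `x → ∞` for `1 ≤ ℓ ≤ k`. -/
theorem stmt5 (k : ℕ) (hk : 1 ≤ k) (f : ℝ → ℝ) (F : ℕ → ℝ → ℝ)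
    (hF0 : F 0 = f)
    (hderiv : ∀ ℓ < k, ∀ x ∈ Set.Ioi (1 : ℝ), HasDerivAt (F ℓ) (F (ℓ + 1) x) x)
    (hcont : ContinuousOn (F k) (Set.Ioi (1 : ℝ)))
    (hintF : ∀ ℓ ≤ k, MeasureTheory.IntegrableOn (F ℓ) (Set.Ioi 1))
    (hint : MeasureTheory.IntegrableOn (fun x : ℝ => x ^ k * F k x) (Set.Ioi 1)) :
    (∀ ℓ < k, MeasureTheory.IntegrableOn (fun x : ℝ => x ^ ℓ * F ℓ x) (Set.Ioi 1)) ∧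
    (∀ ℓ : ℕ, 1 ≤ ℓ → ℓ ≤ k →
      Filter.Tendsto (fun x : ℝ => x ^ ℓ * F (ℓ - 1) x) Filter.atTop (nhds 0)) := by
  have hcontAll : ∀ m, m ≤ k → ContinuousOn (F m) (Set.Ioi 1) := by
    intro m hm
    rcases lt_or_eq_of_le hm with hlt | heq
    · exact fun x hx => (hderiv m hlt x hx).continuousAt.continuousWithinAt
    · rw [heq]; exact hcont
  have key : ∀ d ℓ, ℓ + d = k → IntegrableOn (fun x : ℝ => x ^ ℓ * F ℓ x) (Set.Ioi 1) := by
    intro d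
    induction d with
    | zero =>
      intro ℓ hℓ
      have hek : ℓ = k := by omega
      subst hek; exact hint
    | succ d ih =>
      intro ℓ hℓ
      have hlt : ℓ < k := by omega
      exact aux_step ℓ (hderiv ℓ hlt) (hcontAll (ℓ+1) (by omega)) (hintF ℓ (by omega))
        (hintF (ℓ+1) (by omega)) (ih (ℓ+1) (by omega))
  have keyAll : ∀ ℓ, ℓ ≤ k → IntegrableOn (fun x : ℝ => x ^ ℓ * F ℓ x) (Set.Ioi 1) :=
    fun ℓ hℓ => key (k - ℓ) ℓ (by omega)
  refine ⟨fun ℓ hℓ => keyAll ℓ (le_of_lt hℓ), ?_⟩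
  intro ℓ h1 h2
  have hnorm : IntegrableOn (fun t : ℝ => t ^ ℓ * ‖F ℓ t‖) (Set.Ioi 1) := by
    apply IntegrableOn.congr_fun (keyAll ℓ h2).norm _ measurableSet_Ioi
    intro t ht
    have ht0 : (0:ℝ) < t := lt_trans one_pos ht
    simp [norm_mul, abs_of_pos ht0]
  have hd' : ∀ x ∈ Set.Ioi (1:ℝ), HasDerivAt (F (ℓ-1)) (F ℓ x) x := by
    have h := hderiv (ℓ-1) (by omega)
    have he : ℓ - 1 + 1 = ℓ := by omega
    rw [he] at h
    exact h
  have hbnd := fun (x : ℝ) (hx : x ∈ Set.Ioi (1:ℝ)) =>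
    aux_bound ℓ hd' (hintF (ℓ-1) (by omega)) (hintF ℓ h2) hnorm hx
  apply squeeze_zero_norm' (a := fun x => ∫ t in Set.Ioi x, t ^ ℓ * ‖F ℓ t‖)
  · filter_upwards [eventually_gt_atTop (1:ℝ)] with x hx
    exact hbnd x hx
  · exact aux_tail_tendsto hnorm
end

section
/- Let V : (0,∞) → ℝ be four times continuously differentiable, and for an integer ℓ ≥ 0 define 𝕍_ℓ(x) := sup_{y ∈ (x,∞)} |V^{(ℓ)}(y)|. Assume: V^{(ℓ)} is Lebesgue integrable on (1,∞) for ℓ = 0, 1, 2, 3; x ↦ x²·V''(x) is Lebesgue integrable on (0,1); x ↦ x³·𝕍₃(x) is Lebesgue integrable on (1,∞); and sup_{x > 1} x^{k+1}·|V^{(k)}(x)| < ∞ for k = 3, 4. Then for every c > 0: (i) x ↦ x^k V^{(k)}(x) is Lebesgue integrable on (0,∞) for k = 0, 1; (ii) x^{k+1}·𝕍_k(x) → 0 as x → 0⁺ for k = 0, 1; (iii) x ↦ x^k·𝕍_k(x) is Lebesgue integrable on (c,∞) for k = 0, 1, 2, 3; (iv) x^{k+1}·𝕍_k(x) → 0 as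 x → ∞ for k = 0, 1, 2; and (v) sup_{x > c} x^{k+1}·𝕍_k(x) < ∞ for k = 0, 1, 2, 3, 4. -/
open MeasureTheory Set Filter Topology ENNReal

/-- `supAbsOn g s = sup_{y ∈ s} |g y|` (as a real `sSup`). -/
noncomputable def supAbsOn (g : ℝ → ℝ) (s : Set ℝ) : ℝ :=
  sSup ((fun y : ℝ => |g y|) '' s)



/-- If `f` is integrable on `(1,∞)` and tends to `L` at infinity, then `L = 0`. -/
lemma lim_eq_zero_of_integrable {f : ℝ → ℝ} (hf : IntegrableOn f (Set.Ioi 1))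
    {L : ℝ} (hL : Tendsto f atTop (𝓝 L)) : L = 0 := by
  by_contra hL0
  have hev : ∀ᶠ x in atTop, |L| / 2 ≤ |f x| := by
    have := hL.eventually (eventually_ge_nhds (show L - |L|/2 < L by
      have : 0 < |L| := abs_pos.2 hL0; linarith))
    have h2 := hL.eventually (eventually_le_nhds (show L < L + |L|/2 by
      have : 0 < |L| := abs_pos.2 hL0; linarith))
    filter_upwards [this, h2] with x h1 h2
    rcases abs_cases L with ⟨hc, _⟩ | ⟨hc, _⟩
    · rw [hc] at h1 ⊢; calc L/2 ≤ f x := by linarith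
        _ ≤ |f x| := le_abs_self _
    · rw [hc] at h1 h2 ⊢
      have : f x ≤ L/2 := by linarith
      calc -L/2 ≤ -(f x) := by linarith
        _ ≤ |f x| := neg_le_abs _
  obtain ⟨X, hX⟩ := hev.exists_forall_of_atTop
  set Y := max X 2 with hY
  have h1Y : (1:ℝ) ≤ Y := le_trans (by norm_num) (le_max_right _ _)
  have hint : IntegrableOn f (Set.Ioi Y) := hf.mono_set (Ioi_subset_Ioi h1Y)
  have hconst : IntegrableOn (fun _ : ℝ => |L| / 2) (Set.Ioi Y) := by
    refine Integrable.mono' hint.abs ?_ ?_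
    · exact aestronglyMeasurable_const
    · refine (ae_restrict_iff' measurableSet_Ioi).2 (Filter.Eventually.of_forall ?_)
      intro x hx
      have : |L|/2 ≤ |f x| := hX x (le_trans (le_max_left _ _) (le_of_lt hx))
      simpa [abs_of_nonneg (by positivity : (0:ℝ) ≤ |L|/2)] using this
  rw [IntegrableOn, integrable_const_iff] at hconst
  rcases hconst with h | h
  · exact hL0 (by simpa using abs_eq_zero.1 (by linarith [abs_nonneg L, (div_eq_zero_iff.1 h).resolve_right (by norm_num)]))
  · have h := @measure_lt_top _ _ _ h univ
    rw [Measure.restrict_apply_univ, Real.volume_Ioi] at h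
    exact (lt_irrefl _ h).elim


/-- Tonelli-type swap for integrals over `{(x,t) : x,t ∈ S, x < t}`. -/
lemma lintegral_swap_triangle (S : Set ℝ) (hS : MeasurableSet S)
    (f g : ℝ → ℝ≥0∞) (hf : Measurable f) (hg : Measurable g) :
    ∫⁻ x in S, f x * ∫⁻ t in S ∩ Set.Ioi x, g t
      = ∫⁻ t in S, g t * ∫⁻ x in S ∩ Set.Iio t, f x := by
  set W : Set (ℝ × ℝ) := {q : ℝ × ℝ | q.1 ∈ S ∧ q.2 ∈ S ∧ q.1 < q.2} with hWdef
  have hW : MeasurableSet W := by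
    refine MeasurableSet.inter (hS.preimage measurable_fst) ?_
    exact MeasurableSet.inter (hS.preimage measurable_snd)
      (measurableSet_lt measurable_fst measurable_snd)
  set J : ℝ × ℝ → ℝ≥0∞ := W.indicator (fun q => f q.1 * g q.2) with hJdef
  have hJ : Measurable J :=
    ((hf.comp measurable_fst).mul (hg.comp measurable_snd)).indicator hW
  have hL : ∫⁻ x in S, f x * ∫⁻ t in S ∩ Set.Ioi x, g t = ∫⁻ x, ∫⁻ t, J (x, t) := by
    rw [← lintegral_indicator hS]
    refine lintegral_congr fun x => ?_
    by_cases hx : x ∈ S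
    · rw [Set.indicator_of_mem hx]
      have hJx : ∀ t, J (x, t) = (S ∩ Set.Ioi x).indicator (fun t => f x * g t) t := by
        intro t
        by_cases ht : t ∈ S ∩ Set.Ioi x
        · rw [Set.indicator_of_mem ht]
          exact Set.indicator_of_mem (show (x,t) ∈ W from ⟨hx, ht.1, ht.2⟩) _
        · rw [Set.indicator_of_notMem ht]
          refine Set.indicator_of_notMem ?_ _
          intro hmem
          exact ht ⟨hmem.2.1, hmem.2.2⟩
      rw [lintegral_congr hJx, lintegral_indicator (hS.inter measurableSet_Ioi),
        lintegral_const_mul _ hg]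
    · rw [Set.indicator_of_notMem hx]
      have : ∀ t, J (x, t) = 0 := by
        intro t
        refine Set.indicator_of_notMem ?_ _
        intro hmem; exact hx hmem.1
      simp [this]
  have hR : ∫⁻ t in S, g t * ∫⁻ x in S ∩ Set.Iio t, f x = ∫⁻ t, ∫⁻ x, J (x, t) := by
    rw [← lintegral_indicator hS]
    refine lintegral_congr fun t => ?_
    by_cases ht : t ∈ S
    · rw [Set.indicator_of_mem ht]
      have hJt : ∀ x, J (x, t) = (S ∩ Set.Iio t).indicator (fun x => g t * f x) x := by
        intro x
        by_cases hx : x ∈ S ∩ Set.Iio t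
        · rw [Set.indicator_of_mem hx]
          exact (Set.indicator_of_mem (show (x,t) ∈ W from ⟨hx.1, ht, hx.2⟩) _).trans (mul_comm _ _)
        · rw [Set.indicator_of_notMem hx]
          refine Set.indicator_of_notMem ?_ _
          intro hmem
          exact hx ⟨hmem.1, hmem.2.2⟩
      rw [lintegral_congr hJt, lintegral_indicator (hS.inter measurableSet_Iio),
        lintegral_const_mul _ hf]
    · rw [Set.indicator_of_notMem ht]
      have : ∀ x, J (x, t) = 0 := by
        intro x
        refine Set.indicator_of_notMem ?_ _
        intro hmem; exact ht hmem.2.1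
      simp [this]
  rw [hL, hR]
  have := lintegral_lintegral_swap (μ := (volume : Measure ℝ)) (ν := (volume : Measure ℝ))
    (f := fun x t => J (x, t)) (by exact hJ.aemeasurable)
  exact this



/-- The tail integral of an integrable function tends to zero. -/
lemma tail_tendsto_zero {g : ℝ → ℝ} (hg : IntegrableOn g (Set.Ioi 1)) :
    Tendsto (fun x : ℝ => ∫ t in Set.Ioi x, g t) atTop (𝓝 0) := by
  have h1 : Tendsto (fun x : ℝ => ∫ t in (1:ℝ)..x, g t) atTop
      (𝓝 (∫ t in Set.Ioi 1, g t)) :=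
    intervalIntegral_tendsto_integral_Ioi 1 hg tendsto_id
  have h2 : Tendsto (fun x : ℝ => (∫ t in Set.Ioi 1, g t) - ∫ t in (1:ℝ)..x, g t)
      atTop (𝓝 ((∫ t in Set.Ioi 1, g t) - ∫ t in Set.Ioi 1, g t)) :=
    tendsto_const_nhds.sub h1
  rw [sub_self] at h2
  refine h2.congr' ?_
  filter_upwards [eventually_ge_atTop (1:ℝ)] with x hx
  have hsplit : (∫ t in Set.Ioc 1 x, g t) + ∫ t in Set.Ioi x, g t = ∫ t in Set.Ioi 1, g t := by
    have := setIntegral_union (μ := volume) (f := g) (Set.Ioc_disjoint_Ioi le_rfl) measurableSet_Ioi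
      (hg.mono_set Set.Ioc_subset_Ioi_self) (hg.mono_set (Set.Ioi_subset_Ioi hx))
    rw [Set.Ioc_union_Ioi_eq_Ioi hx] at this
    exact this.symm
  rw [intervalIntegral.integral_of_le hx]
  rw [← hsplit]
  ring

/-- The head integral of an integrable function on `(0,1)` tends to zero. -/
lemma head_tendsto_zero {g : ℝ → ℝ} (hg : IntegrableOn g (Set.Ioo 0 1)) :
    Tendsto (fun x : ℝ => ∫ t in Set.Ioo 0 x, g t) (𝓝[>] 0) (𝓝 0) := by
  have hIcc : IntegrableOn g (Set.Icc 0 1) := by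
    rwa [IntegrableOn, ← Measure.restrict_congr_set Ioo_ae_eq_Icc]
  have hcont := intervalIntegral.continuousOn_primitive (a := (0:ℝ)) (b := 1)
    (μ := volume) hIcc
  have h0 : ContinuousWithinAt (fun x => ∫ t in Set.Ioc 0 x, g t) (Set.Icc 0 1) 0 :=
    hcont 0 ⟨le_refl _, zero_le_one⟩
  have hval : (∫ t in Set.Ioc (0:ℝ) 0, g t) = 0 := by simp
  have htend : Tendsto (fun x => ∫ t in Set.Ioc 0 x, g t) (𝓝[Set.Icc 0 1] 0) (𝓝 0) := by
    simpa [ContinuousWithinAt, hval] using h0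
  have hle : 𝓝[>] (0:ℝ) ≤ 𝓝[Set.Icc 0 1] 0 := by
    rw [← nhdsWithin_Ioo_eq_nhdsGT (zero_lt_one (α := ℝ))]
    exact nhdsWithin_mono _ Set.Ioo_subset_Icc_self
  refine (htend.mono_left hle).congr fun x => ?_
  exact (integral_Ioc_eq_integral_Ioo)



lemma le_supAbsOn {g : ℝ → ℝ} {x y : ℝ} (hy : x < y)
    (hb : BddAbove ((fun y : ℝ => |g y|) '' Set.Ioi x)) :
    |g y| ≤ supAbsOn g (Set.Ioi x) :=
  le_csSup hb ⟨y, hy, rfl⟩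

lemma supAbsOn_nonneg {g : ℝ → ℝ} {x : ℝ}
    (hb : BddAbove ((fun y : ℝ => |g y|) '' Set.Ioi x)) :
    0 ≤ supAbsOn g (Set.Ioi x) :=
  le_trans (abs_nonneg (g (x+1))) (le_supAbsOn (by linarith) hb)

lemma supAbsOn_le {g : ℝ → ℝ} {x M : ℝ} (h : ∀ y, x < y → |g y| ≤ M) :
    supAbsOn g (Set.Ioi x) ≤ M :=
  csSup_le ((Set.nonempty_Ioi.image _)) (by rintro z ⟨y, hy, rfl⟩; exact h y hy)

lemma supAbsOn_mono {g : ℝ → ℝ} {x x' : ℝ} (hxx : x ≤ x')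
    (hb : BddAbove ((fun y : ℝ => |g y|) '' Set.Ioi x)) :
    supAbsOn g (Set.Ioi x') ≤ supAbsOn g (Set.Ioi x) :=
  csSup_le_csSup hb (Set.nonempty_Ioi.image _)
    (Set.image_mono (Set.Ioi_subset_Ioi hxx))

/-- The key `√x`-splitting lemma for behaviour at `0⁺`. -/
lemma tendsto_pow_mul_integral_tail_zero {m : ℕ} (hm : 1 ≤ m) {g h : ℝ → ℝ}
    (hg : IntegrableOn g (Set.Ioo 0 1))
    (hh : ∀ x ∈ Set.Ioo (0:ℝ) 1, IntegrableOn h (Set.Ioo x 1))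
    (hh0 : ∀ t ∈ Set.Ioo (0:ℝ) 1, 0 ≤ h t)
    (hdom : ∀ t ∈ Set.Ioo (0:ℝ) 1, t ^ m * h t ≤ g t) :
    Tendsto (fun x : ℝ => x ^ m * ∫ t in Set.Ioo x 1, h t) (𝓝[>] (0:ℝ)) (𝓝 0) := by
  have hg0 : ∀ t ∈ Set.Ioo (0:ℝ) 1, 0 ≤ g t := fun t ht =>
    le_trans (mul_nonneg (pow_nonneg ht.1.le m) (hh0 t ht)) (hdom t ht)
  set C := ∫ t in Set.Ioo (0:ℝ) 1, g t with hC
  have hC0 : 0 ≤ C := setIntegral_nonneg measurableSet_Ioo hg0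
  -- the squeeze bound
  have key : ∀ x ∈ Set.Ioo (0:ℝ) 1,
      x ^ m * ∫ t in Set.Ioo x 1, h t ≤ (∫ t in Set.Ioo 0 (Real.sqrt x), g t) + Real.sqrt x * C := by
    intro x hx
    obtain ⟨hx0, hx1⟩ := hx
    set r := Real.sqrt x with hr
    have hr0 : 0 < r := Real.sqrt_pos.2 hx0
    have hr1 : r < 1 := by
      rw [hr]; rw [show (1:ℝ) = Real.sqrt 1 by simp]
      exact Real.sqrt_lt_sqrt hx0.le hx1
    have hxr : x < r := by
      nlinarith [Real.sq_sqrt hx0.le]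
    have hrIoo : r ∈ Set.Ioo (0:ℝ) 1 := ⟨hr0, hr1⟩
    have hsub1 : Set.Ioo x r ⊆ Set.Ioo x 1 := Set.Ioo_subset_Ioo le_rfl hr1.le
    have hsub2 : Set.Ico r 1 ⊆ Set.Ioo x 1 := fun t ht => ⟨lt_of_lt_of_le hxr ht.1, ht.2⟩
    have hsub3 : Set.Ioo x r ⊆ Set.Ioo 0 1 := fun t ht => ⟨lt_trans hx0 ht.1, lt_trans ht.2 hr1⟩
    have hsub4 : Set.Ico r 1 ⊆ Set.Ioo 0 1 := fun t ht => ⟨lt_of_lt_of_le hr0 ht.1, ht.2⟩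
    have hhint := hh x ⟨hx0, hx1⟩
    have hsplit : (∫ t in Set.Ioo x 1, h t)
        = (∫ t in Set.Ioo x r, h t) + ∫ t in Set.Ico r 1, h t := by
      have hu : Set.Ioo x r ∪ Set.Ico r 1 = Set.Ioo x 1 := Set.Ioo_union_Ico_eq_Ioo hxr hr1.le
      rw [← hu]
      exact setIntegral_union (by rw [Set.disjoint_left]; rintro t ht1 ht2; exact absurd ht2.1 (not_le.2 ht1.2)) measurableSet_Ico
        (hhint.mono_set hsub1) (hhint.mono_set hsub2)
    have hbound1 : x ^ m * ∫ t in Set.Ioo x r, h t ≤ ∫ t in Set.Ioo 0 r, g t := by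
      rw [← MeasureTheory.integral_const_mul]
      have h1 : ∫ t in Set.Ioo x r, x ^ m * h t ≤ ∫ t in Set.Ioo x r, g t := by
        refine setIntegral_mono_on ((hhint.mono_set hsub1).const_mul _)
          (hg.mono_set hsub3) measurableSet_Ioo ?_
        intro t ht
        have htIoo := hsub3 ht
        calc x ^ m * h t ≤ t ^ m * h t := by
              refine mul_le_mul_of_nonneg_right ?_ (hh0 t htIoo)
              exact pow_le_pow_left₀ hx0.le ht.1.le m
          _ ≤ g t := hdom t htIoo
      refine le_trans h1 (setIntegral_mono_set (hg.mono_set (Set.Ioo_subset_Ioo_right hr1.le)) ?_ ?_)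
      · refine (ae_restrict_iff' measurableSet_Ioo).2 (Filter.Eventually.of_forall ?_)
        intro t ht
        exact hg0 t ⟨ht.1, lt_trans ht.2 hr1⟩
      · exact HasSubset.Subset.eventuallyLE (Set.Ioo_subset_Ioo_left hx0.le)

    have hbound2 : x ^ m * ∫ t in Set.Ico r 1, h t ≤ r * C := by
      have h1 : ∫ t in Set.Ico r 1, h t ≤ ∫ t in Set.Ico r 1, g t / r ^ m := by
        refine setIntegral_mono_on (hhint.mono_set hsub2)
          ((hg.mono_set hsub4).div_const _) measurableSet_Ico ?_
        intro t ht
        have htIoo := hsub4 ht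
        rw [le_div_iff₀ (by positivity)]
        calc h t * r ^ m ≤ h t * t ^ m := by
              refine mul_le_mul_of_nonneg_left ?_ (hh0 t htIoo)
              exact pow_le_pow_left₀ hr0.le ht.1 m
          _ = t ^ m * h t := mul_comm _ _
          _ ≤ g t := hdom t htIoo
      have h2 : ∫ t in Set.Ico r 1, g t / r ^ m = (∫ t in Set.Ico r 1, g t) / r ^ m := by
        simp [div_eq_mul_inv, MeasureTheory.integral_mul_const]
      have h3 : ∫ t in Set.Ico r 1, g t ≤ C := by
        refine setIntegral_mono_set hg ?_ (HasSubset.Subset.eventuallyLE hsub4)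
        exact (ae_restrict_iff' measurableSet_Ioo).2 (Filter.Eventually.of_forall hg0)
      have h4 : x ^ m * ∫ t in Set.Ico r 1, h t ≤ x ^ m * ((∫ t in Set.Ico r 1, g t) / r ^ m) := by
        refine mul_le_mul_of_nonneg_left ?_ (by positivity)
        rw [← h2]; exact h1
      refine le_trans h4 ?_
      have hxm : x ^ m / r ^ m ≤ r := by
        have hx_eq : x = r ^ 2 := by rw [hr, Real.sq_sqrt hx0.le]
        rw [hx_eq, ← pow_mul, div_le_iff₀ (by positivity)]
        calc r ^ (2 * m) = r ^ m * r ^ m := by rw [two_mul, pow_add]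
          _ ≤ r ^ 1 * r ^ m := by
              refine mul_le_mul_of_nonneg_right ?_ (by positivity)
              exact pow_le_pow_of_le_one hr0.le hr1.le hm
          _ = r * r ^ m := by rw [pow_one]
      calc x ^ m * ((∫ t in Set.Ico r 1, g t) / r ^ m)
          = (x ^ m / r ^ m) * ∫ t in Set.Ico r 1, g t := by ring
        _ ≤ r * C := by
            refine mul_le_mul hxm h3 (setIntegral_nonneg measurableSet_Ico
              (fun t ht => hg0 t (hsub4 ht))) hr0.le
    calc x ^ m * ∫ t in Set.Ioo x 1, h t
        = (x ^ m * ∫ t in Set.Ioo x r, h t) + x ^ m * ∫ t in Set.Ico r 1, h t := by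
          rw [hsplit]; ring
      _ ≤ (∫ t in Set.Ioo 0 r, g t) + r * C := add_le_add hbound1 hbound2
  -- now squeeze
  have hsqrt : Tendsto Real.sqrt (𝓝[>] (0:ℝ)) (𝓝[>] (0:ℝ)) := by
    rw [tendsto_nhdsWithin_iff]
    constructor
    · have : Tendsto Real.sqrt (𝓝 0) (𝓝 0) := by
        simpa using (Real.continuous_sqrt.tendsto 0)
      exact this.mono_left nhdsWithin_le_nhds
    · filter_upwards [self_mem_nhdsWithin] with x hx
      exact Real.sqrt_pos.2 hx
  have hT : Tendsto (fun x : ℝ => ∫ t in Set.Ioo 0 (Real.sqrt x), g t) (𝓝[>] (0:ℝ)) (𝓝 0) :=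
    (head_tendsto_zero hg).comp hsqrt
  have hT2 : Tendsto (fun x : ℝ => Real.sqrt x * C) (𝓝[>] (0:ℝ)) (𝓝 0) := by
    have : Tendsto (fun x : ℝ => Real.sqrt x * C) (𝓝 0) (𝓝 (Real.sqrt 0 * C)) :=
      (Real.continuous_sqrt.mul continuous_const).tendsto 0
    simpa using this.mono_left nhdsWithin_le_nhds
  have hsum : Tendsto (fun x : ℝ => (∫ t in Set.Ioo 0 (Real.sqrt x), g t) + Real.sqrt x * C)
      (𝓝[>] (0:ℝ)) (𝓝 0) := by simpa using hT.add hT2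
  refine squeeze_zero' ?_ ?_ hsum
  · filter_upwards [Ioo_mem_nhdsGT_of_mem ⟨le_refl (0:ℝ), zero_lt_one⟩] with x hx
    exact mul_nonneg (pow_nonneg hx.1.le m)
      (setIntegral_nonneg measurableSet_Ioo (fun t ht => hh0 t ⟨lt_trans hx.1 ht.1, ht.2⟩))
  · filter_upwards [Ioo_mem_nhdsGT_of_mem ⟨le_refl (0:ℝ), zero_lt_one⟩] with x hx
    exact key x hx


lemma exists_meas_rep (f : ℝ → ℝ) (hf : ContinuousOn f (Set.Ioi 0)) :
    ∃ g : ℝ → ℝ, Measurable g ∧ ∀ᵐ t, t ∈ Set.Ioi (0:ℝ) → g t = f t := by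
  have h1 : AEMeasurable ((Set.Ioi (0:ℝ)).indicator f) volume :=
    (aemeasurable_indicator_iff measurableSet_Ioi).2 (hf.aemeasurable measurableSet_Ioi)
  refine ⟨h1.mk _, h1.measurable_mk, ?_⟩
  filter_upwards [h1.ae_eq_mk] with t ht htmem
  rw [← ht, Set.indicator_of_mem htmem]

/-- Corollary 4.6: consequences of the assumptions on `V` used for the regime `m = 3`.
`V` is `C⁴` on `(0,∞)` (encoded via the derivative family `Vd`, `Vd 0 = V`), and
`𝕍_ℓ(x) = supAbsOn (Vd ℓ) (Ioi x)`. -/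
theorem stmt11 (V : ℝ → ℝ) (Vd : ℕ → ℝ → ℝ)
    (hVd0 : Vd 0 = V)
    (hderiv : ∀ ℓ < 4, ∀ x : ℝ, 0 < x → HasDerivAt (Vd ℓ) (Vd (ℓ + 1) x) x)
    (hcont : ContinuousOn (Vd 4) (Set.Ioi 0))
    (hinttail : ∀ ℓ ≤ 3, MeasureTheory.IntegrableOn (Vd ℓ) (Set.Ioi 1))
    (hint2 : MeasureTheory.IntegrableOn
      (fun x : ℝ => x ^ 2 * Vd 2 x) (Set.Ioo 0 1))
    (hint3 : MeasureTheory.IntegrableOn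
      (fun x : ℝ => x ^ 3 * supAbsOn (Vd 3) (Set.Ioi x)) (Set.Ioi 1))
    (hbdd : ∀ k : ℕ, 3 ≤ k → k ≤ 4 →
      ∃ M : ℝ, ∀ x : ℝ, 1 < x → x ^ (k + 1) * |Vd k x| ≤ M) :
    ∀ c : ℝ, 0 < c →
    (∀ k ≤ 1, MeasureTheory.IntegrableOn
      (fun x : ℝ => x ^ k * Vd k x) (Set.Ioi 0)) ∧
    (∀ k ≤ 1,
      Filter.Tendsto (fun x : ℝ => x ^ (k + 1) * supAbsOn (Vd k) (Set.Ioi x))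
        (nhdsWithin 0 (Set.Ioi 0)) (nhds 0)) ∧
    (∀ k ≤ 3, MeasureTheory.IntegrableOn
      (fun x : ℝ => x ^ k * supAbsOn (Vd k) (Set.Ioi x)) (Set.Ioi c)) ∧
    (∀ k ≤ 2,
      Filter.Tendsto (fun x : ℝ => x ^ (k + 1) * supAbsOn (Vd k) (Set.Ioi x))
        Filter.atTop (nhds 0)) ∧
    (∀ k ≤ 4, ∃ M : ℝ, ∀ x : ℝ, c < x →
      x ^ (k + 1) * supAbsOn (Vd k) (Set.Ioi x) ≤ M) := by
  classical
  -- continuity of all derivatives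
  have h0 : ∀ k ≤ 4, ContinuousOn (Vd k) (Set.Ioi 0) := by
    intro k hk
    rcases lt_or_eq_of_le hk with hk4 | hk4
    · exact fun x hx => ((hderiv k hk4 x hx).continuousAt).continuousWithinAt
    · subst hk4; exact hcont
  -- fundamental theorem of calculus
  have hFTC : ∀ k ≤ 3, ∀ x y : ℝ, 0 < x → x ≤ y →
      ∫ t in x..y, Vd (k+1) t = Vd k y - Vd k x := by
    intro k hk x y hx hxy
    refine intervalIntegral.integral_eq_sub_of_hasDerivAt ?_ ?_
    · intro t ht
      rw [Set.uIcc_of_le hxy] at ht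
      exact hderiv k (by omega) t (lt_of_lt_of_le hx ht.1)
    · refine ContinuousOn.intervalIntegrable ?_
      refine (h0 (k+1) (by omega)).mono ?_
      rw [Set.uIcc_of_le hxy]
      intro t ht; exact lt_of_lt_of_le hx ht.1
  -- V⁗ is integrable on (1,∞)
  obtain ⟨M4, hM4⟩ := hbdd 4 (by omega) le_rfl
  have hM4nn : 0 ≤ M4 := le_trans (by positivity) (hM4 2 one_lt_two)
  have hrpow5 : ∀ x : ℝ, 0 < x → x ^ (-5 : ℝ) = (x ^ (5:ℕ))⁻¹ := by
    intro x hx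
    rw [show (-5:ℝ) = -((5:ℕ):ℝ) by norm_num, Real.rpow_neg hx.le, Real.rpow_natCast]
  have hint4 : IntegrableOn (Vd 4) (Set.Ioi 1) := by
    have hrint : IntegrableOn (fun x : ℝ => M4 * x ^ (-5 : ℝ)) (Set.Ioi 1) :=
      (integrableOn_Ioi_rpow_of_lt (by norm_num) one_pos).const_mul M4
    refine Integrable.mono' hrint ?_ ?_
    · exact ((h0 4 le_rfl).mono (show Set.Ioi (1:ℝ) ⊆ Set.Ioi 0 from Set.Ioi_subset_Ioi zero_le_one)).aestronglyMeasurable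
        measurableSet_Ioi
    · refine (ae_restrict_iff' measurableSet_Ioi).2 (.of_forall fun x hx => ?_)
      have hx1 : (1:ℝ) < x := hx
      have hx0 : (0:ℝ) < x := lt_trans zero_lt_one hx1
      have h5 := hM4 x hx1
      rw [Real.norm_eq_abs, hrpow5 x hx0]
      rw [← div_eq_mul_inv, le_div_iff₀ (by positivity)]
      calc |Vd 4 x| * x ^ (5:ℕ) = x ^ (4+1) * |Vd 4 x| := by ring
        _ ≤ M4 := h5
  -- each derivative tends to 0 at infinity
  have hlim : ∀ k ≤ 3, Tendsto (Vd k) atTop (𝓝 0) := by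
    intro k hk
    have hd' : IntegrableOn (Vd (k+1)) (Set.Ioi 1) := by
      rcases Nat.lt_or_ge k 3 with h | h
      · exact hinttail (k+1) (by omega)
      · have hk3 : k = 3 := by omega
        subst hk3; exact hint4
    have hint2' : IntegrableOn (Vd (k+1)) (Set.Ioi 2) :=
      hd'.mono_set (Set.Ioi_subset_Ioi one_le_two)
    have h1 : Tendsto (fun x => ∫ t in (2:ℝ)..x, Vd (k+1) t) atTop
        (𝓝 (∫ t in Set.Ioi 2, Vd (k+1) t)) :=
      intervalIntegral_tendsto_integral_Ioi 2 hint2' tendsto_id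
    have h2 : Tendsto (Vd k) atTop (𝓝 (Vd k 2 + ∫ t in Set.Ioi 2, Vd (k+1) t)) := by
      refine ((tendsto_const_nhds (x := Vd k 2)).add h1).congr' ?_
      filter_upwards [eventually_ge_atTop (2:ℝ)] with x hx
      rw [hFTC k hk 2 x two_pos hx]; ring
    have hz := lim_eq_zero_of_integrable (hinttail k hk) h2
    rwa [hz] at h2
  -- boundedness of |Vd k| on tails (x, ∞), x > 0
  have hbdAbove : ∀ k ≤ 4, ∀ x : ℝ, 0 < x → ∃ C : ℝ, ∀ y, x < y → |Vd k y| ≤ C := by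
    intro k hk x hx
    have hev : ∃ X : ℝ, ∀ y, X ≤ y → |Vd k y| ≤ max M4 1 := by
      rcases Nat.lt_or_ge k 4 with h | h
      · have h3 : k ≤ 3 := by omega
        have := (Metric.tendsto_nhds.1 (hlim k h3)) 1 one_pos
        obtain ⟨X, hX⟩ := eventually_atTop.1 this
        refine ⟨X, fun y hy => ?_⟩
        have := hX y hy
        rw [Real.dist_eq, sub_zero] at this
        exact le_trans this.le (le_max_right _ _)
      · have hk4 : k = 4 := by omega
        subst hk4
        refine ⟨2, fun y hy => ?_⟩
        have hy1 : (1:ℝ) < y := by linarith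
        have := hM4 y hy1
        have hy5 : (1:ℝ) ≤ y ^ (4+1) := one_le_pow₀ (by linarith : (1:ℝ) ≤ y)
        refine le_trans ?_ (le_max_left _ _)
        nlinarith [abs_nonneg (Vd 4 y)]
    obtain ⟨X, hX⟩ := hev
    set X' := max X x with hX'
    obtain ⟨C0, hC0⟩ := (isCompact_Icc (a := x) (b := X')).exists_bound_of_continuousOn
      ((h0 k hk).mono (fun t ht => lt_of_lt_of_le hx ht.1))
    refine ⟨max C0 (max M4 1), fun y hy => ?_⟩
    rcases le_or_gt y X' with h | h
    · exact le_trans (by simpa [Real.norm_eq_abs] using hC0 y ⟨hy.le, h⟩) (le_max_left _ _)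
    · exact le_trans (hX y (le_trans (le_max_left X x) h.le)) (le_max_right _ _)
  have hBdd : ∀ k ≤ 4, ∀ x : ℝ, 0 < x →
      BddAbove ((fun y : ℝ => |Vd k y|) '' Set.Ioi x) := by
    intro k hk x hx
    obtain ⟨C, hC⟩ := hbdAbove k hk x hx
    exact ⟨C, by rintro z ⟨y, hy, rfl⟩; exact hC y hy⟩
  have hS0 : ∀ k ≤ 4, ∀ x : ℝ, 0 < x → 0 ≤ supAbsOn (Vd k) (Set.Ioi x) :=
    fun k hk x hx => supAbsOn_nonneg (hBdd k hk x hx)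
  have hVleS : ∀ k ≤ 4, ∀ x : ℝ, 0 < x → |Vd k x| ≤ supAbsOn (Vd k) (Set.Ioi x) := by
    intro k hk x hx
    have hcontx : ContinuousAt (Vd k) x := (h0 k hk).continuousAt (Ioi_mem_nhds hx)
    have htendsto : Tendsto (fun y => |Vd k y|) (𝓝[>] x) (𝓝 |Vd k x|) :=
      (continuous_abs.tendsto _).comp (hcontx.continuousWithinAt)
    refine le_of_tendsto htendsto ?_
    filter_upwards [self_mem_nhdsWithin] with y hy
    exact le_supAbsOn hy (hBdd k hk x hx)
  -- representation by the tail integral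
  have hrep : ∀ k ≤ 2, ∀ y : ℝ, 1 ≤ y → Vd k y = -∫ t in Set.Ioi y, Vd (k+1) t := by
    intro k hk y hy
    have hint' : IntegrableOn (Vd (k+1)) (Set.Ioi y) :=
      (hinttail (k+1) (by omega)).mono_set (Set.Ioi_subset_Ioi hy)
    have h1 : Tendsto (fun z => ∫ t in y..z, Vd (k+1) t) atTop
        (𝓝 (∫ t in Set.Ioi y, Vd (k+1) t)) :=
      intervalIntegral_tendsto_integral_Ioi y hint' tendsto_id
    have h2 : Tendsto (fun z => Vd k z - Vd k y) atTop (𝓝 (0 - Vd k y)) :=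
      (hlim k (by omega)).sub_const _
    have h3 : Tendsto (fun z => ∫ t in y..z, Vd (k+1) t) atTop (𝓝 (0 - Vd k y)) := by
      refine h2.congr' ?_
      filter_upwards [eventually_ge_atTop y] with z hz
      exact (hFTC k (by omega) y z (lt_of_lt_of_le zero_lt_one hy) hz).symm
    have h4 := tendsto_nhds_unique h1 h3
    rw [h4]; ring
  -- pointwise decay bounds at infinity
  have hPt : ∀ k ≤ 4, ∃ C : ℝ, 0 ≤ C ∧ ∀ y : ℝ, 1 < y → |Vd k y| ≤ C / y ^ (k+1) := by
    have base : ∀ k, 3 ≤ k → k ≤ 4 →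
        ∃ C : ℝ, 0 ≤ C ∧ ∀ y : ℝ, 1 < y → |Vd k y| ≤ C / y ^ (k+1) := by
      intro k h3 h4
      obtain ⟨M, hM⟩ := hbdd k h3 h4
      refine ⟨M, le_trans (by positivity) (hM 2 one_lt_two), fun y hy => ?_⟩
      rw [le_div_iff₀ (by positivity)]
      calc |Vd k y| * y ^ (k+1) = y ^ (k+1) * |Vd k y| := mul_comm _ _
        _ ≤ M := hM y hy
    have step : ∀ k ≤ 2,
        (∃ C : ℝ, 0 ≤ C ∧ ∀ y : ℝ, 1 < y → |Vd (k+1) y| ≤ C / y ^ (k+2)) →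
        (∃ C : ℝ, 0 ≤ C ∧ ∀ y : ℝ, 1 < y → |Vd k y| ≤ C / y ^ (k+1)) := by
      rintro k hk ⟨C, hC0, hC⟩
      refine ⟨C, hC0, fun y hy => ?_⟩
      have hy0 : 0 < y := lt_trans zero_lt_one hy
      have hre : -((k:ℝ)+2) < -1 := by
        have : (0:ℝ) ≤ (k:ℝ) := Nat.cast_nonneg k
        linarith
      have hrconv : ∀ t : ℝ, 0 < t → t ^ (-((k:ℝ)+2)) = (t ^ (k+2:ℕ))⁻¹ := by
        intro t ht
        rw [show -((k:ℝ)+2) = -(((k+2:ℕ)):ℝ) by push_cast; ring, Real.rpow_neg ht.le,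
          Real.rpow_natCast]
      have hint' : IntegrableOn (Vd (k+1)) (Set.Ioi y) :=
        (hinttail (k+1) (by omega)).mono_set (Set.Ioi_subset_Ioi hy.le)
      have hrpowint : IntegrableOn (fun t : ℝ => C * t ^ (-((k:ℝ)+2))) (Set.Ioi y) :=
        (integrableOn_Ioi_rpow_of_lt hre hy0).const_mul C
      have hmain : |Vd k y| ≤ C * ∫ t in Set.Ioi y, t ^ (-((k:ℝ)+2)) := by
        rw [hrep k hk y hy.le, abs_neg]
        calc |∫ t in Set.Ioi y, Vd (k+1) t| ≤ ∫ t in Set.Ioi y, |Vd (k+1) t| := by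
              simpa [Real.norm_eq_abs] using
                norm_integral_le_integral_norm (μ := volume.restrict (Set.Ioi y)) (Vd (k+1))
          _ ≤ ∫ t in Set.Ioi y, C * t ^ (-((k:ℝ)+2)) := by
              refine setIntegral_mono_on hint'.abs hrpowint measurableSet_Ioi ?_
              intro t ht
              have ht1 : 1 < t := lt_trans hy ht
              have ht0 : 0 < t := lt_trans zero_lt_one ht1
              have := hC t ht1
              rw [hrconv t ht0, ← div_eq_mul_inv]
              exact this
          _ = C * ∫ t in Set.Ioi y, t ^ (-((k:ℝ)+2)) := MeasureTheory.integral_const_mul C _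
      rw [integral_Ioi_rpow_of_lt hre hy0] at hmain
      have hexp : -((k:ℝ)+2) + 1 = -((k:ℝ)+1) := by ring
      rw [hexp] at hmain
      have hyp : y ^ (-((k:ℝ)+1)) = (y ^ (k+1:ℕ))⁻¹ := by
        rw [show -((k:ℝ)+1) = -(((k+1:ℕ)):ℝ) by push_cast; ring, Real.rpow_neg hy0.le,
          Real.rpow_natCast]
      rw [hyp] at hmain
      refine le_trans hmain ?_
      rw [div_eq_mul_inv C]
      have hk1 : (1:ℝ) ≤ (k:ℝ) + 1 := by
        have : (0:ℝ) ≤ (k:ℝ) := Nat.cast_nonneg k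
        linarith
      have hpos : (0:ℝ) < (y ^ (k+1:ℕ))⁻¹ := by positivity
      calc C * (-(y ^ (k+1:ℕ))⁻¹ / -((k:ℝ)+1)) = C * ((y ^ (k+1:ℕ))⁻¹ / ((k:ℝ)+1)) := by
            rw [neg_div_neg_eq]
        _ ≤ C * (y ^ (k+1:ℕ))⁻¹ :=
            mul_le_mul_of_nonneg_left (div_le_self hpos.le hk1) hC0
    intro k hk
    interval_cases k
    · exact step 0 (by omega) (step 1 (by omega) (step 2 (by omega)
        (base 3 (by omega) (by omega))))
    · exact step 1 (by omega) (step 2 (by omega) (base 3 (by omega) (by omega)))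
    · exact step 2 (by omega) (base 3 (by omega) (by omega))
    · exact base 3 (by omega) (by omega)
    · exact base 4 (by omega) (by omega)
  -- decay of the envelopes at infinity
  have hD : ∀ k ≤ 4, ∃ C : ℝ, 0 ≤ C ∧ ∀ x : ℝ, 1 < x →
      supAbsOn (Vd k) (Set.Ioi x) ≤ C / x ^ (k+1) := by
    intro k hk
    obtain ⟨C, hC0, hC⟩ := hPt k hk
    refine ⟨C, hC0, fun x hx => ?_⟩
    have hx0 : 0 < x := lt_trans zero_lt_one hx
    refine supAbsOn_le fun y hy => ?_
    refine le_trans (hC y (lt_trans hx hy)) ?_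
    exact div_le_div_of_nonneg_left hC0 (by positivity)
      (pow_le_pow_left₀ hx0.le hy.le _)
  -- measurability of the envelopes
  have hSmeas : ∀ k ≤ 4, ∀ c : ℝ, 0 < c →
      AEStronglyMeasurable (fun x => supAbsOn (Vd k) (Set.Ioi x)) (volume.restrict (Set.Ioi c)) := by
    intro k hk c hc
    have hT : Antitone (fun x => supAbsOn (Vd k) (Set.Ioi (max x c))) := by
      intro a b hab
      exact supAbsOn_mono (max_le_max hab le_rfl)
        (hBdd k hk (max a c) (lt_of_lt_of_le hc (le_max_right a c)))
    refine (hT.measurable.aestronglyMeasurable).congr ?_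
    refine (ae_restrict_iff' measurableSet_Ioi).2 (.of_forall fun x hx => ?_)
    show supAbsOn (Vd k) (Set.Ioi (max x c)) = supAbsOn (Vd k) (Set.Ioi x)
    rw [max_eq_left (le_of_lt hx)]
  have hXSmeas : ∀ k ≤ 4, ∀ j : ℕ, ∀ c : ℝ, 0 < c →
      AEStronglyMeasurable (fun x => x ^ j * supAbsOn (Vd k) (Set.Ioi x))
        (volume.restrict (Set.Ioi c)) := by
    intro k hk j c hc
    exact ((measurable_id.pow_const j).aestronglyMeasurable).mul (hSmeas k hk c hc)
  -- the envelope of Vd (k+1), made globally measurable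
  have hS'meas : ∀ k ≤ 4, Measurable (fun x : ℝ => supAbsOn (Vd k) (Set.Ioi (max x 1))) := by
    intro k hk
    refine Antitone.measurable ?_
    intro a b hab
    exact supAbsOn_mono (max_le_max hab le_rfl)
      (hBdd k hk _ (lt_of_lt_of_le zero_lt_one (le_max_right _ _)))
  -- integrability chain on (1,∞)
  have hQstep : ∀ k ≤ 2,
      IntegrableOn (fun x : ℝ => x ^ (k+1) * supAbsOn (Vd (k+1)) (Set.Ioi x)) (Set.Ioi 1) →
      IntegrableOn (fun x : ℝ => x ^ k * supAbsOn (Vd k) (Set.Ioi x)) (Set.Ioi 1) := by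
    intro k hk hQk1
    have hk14 : k + 1 ≤ 4 := by omega
    -- S (k+1) is integrable on (1,∞)
    have hSk1int : IntegrableOn (fun x : ℝ => supAbsOn (Vd (k+1)) (Set.Ioi x)) (Set.Ioi 1) := by
      refine Integrable.mono' hQk1 (hSmeas (k+1) hk14 1 one_pos) ?_
      refine (ae_restrict_iff' measurableSet_Ioi).2 (.of_forall fun x hx => ?_)
      have hx1 : (1:ℝ) < x := hx
      have hx0 : (0:ℝ) < x := lt_trans zero_lt_one hx1
      have hSnn : 0 ≤ supAbsOn (Vd (k+1)) (Set.Ioi x) := hS0 (k+1) hk14 x hx0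
      rw [Real.norm_eq_abs, abs_of_nonneg hSnn]
      calc supAbsOn (Vd (k+1)) (Set.Ioi x) = 1 * supAbsOn (Vd (k+1)) (Set.Ioi x) := by ring
        _ ≤ x ^ (k+1) * supAbsOn (Vd (k+1)) (Set.Ioi x) :=
            mul_le_mul_of_nonneg_right (one_le_pow₀ hx1.le) hSnn
    -- the key envelope bound
    have hE : ∀ x : ℝ, 1 < x → supAbsOn (Vd k) (Set.Ioi x)
        ≤ ∫ t in Set.Ioi x, supAbsOn (Vd (k+1)) (Set.Ioi t) := by
      intro x hx
      refine supAbsOn_le fun y hy => ?_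
      have hy1 : 1 < y := lt_trans hx hy
      have h1 : |Vd k y| ≤ ∫ t in Set.Ioi y, |Vd (k+1) t| := by
        rw [hrep k hk y hy1.le, abs_neg]
        simpa [Real.norm_eq_abs] using
          norm_integral_le_integral_norm (μ := volume.restrict (Set.Ioi y)) (Vd (k+1))
      have h2 : ∫ t in Set.Ioi y, |Vd (k+1) t|
          ≤ ∫ t in Set.Ioi y, supAbsOn (Vd (k+1)) (Set.Ioi t) := by
        refine setIntegral_mono_on
          (((hinttail (k+1) (by omega)).mono_set (Set.Ioi_subset_Ioi hy1.le)).abs)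
          (hSk1int.mono_set (Set.Ioi_subset_Ioi hy1.le)) measurableSet_Ioi ?_
        intro t ht
        exact hVleS (k+1) hk14 t (lt_trans (lt_trans zero_lt_one hy1) ht)
      have h3 : ∫ t in Set.Ioi y, supAbsOn (Vd (k+1)) (Set.Ioi t)
          ≤ ∫ t in Set.Ioi x, supAbsOn (Vd (k+1)) (Set.Ioi t) := by
        refine setIntegral_mono_set (hSk1int.mono_set (Set.Ioi_subset_Ioi hx.le)) ?_
          (Set.Ioi_subset_Ioi hy.le).eventuallyLE
        refine (ae_restrict_iff' measurableSet_Ioi).2 (.of_forall fun t ht => ?_)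
        exact hS0 (k+1) hk14 t (lt_trans (lt_trans zero_lt_one hx) ht)
      linarith
    refine ⟨hXSmeas k (by omega) k 1 one_pos, ?_⟩
    rw [hasFiniteIntegral_iff_ofReal ?hnn]
    case hnn =>
      refine (ae_restrict_iff' measurableSet_Ioi).2 (.of_forall fun x hx => ?_)
      have hx0 : (0:ℝ) < x := lt_trans zero_lt_one hx
      exact mul_nonneg (pow_nonneg hx0.le _) (hS0 k (by omega) x hx0)
    -- the measurable envelope
    set G : ℝ → ℝ≥0∞ := fun t => ENNReal.ofReal (supAbsOn (Vd (k+1)) (Set.Ioi (max t 1)))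
      with hGdef
    have hGmeas : Measurable G := ENNReal.measurable_ofReal.comp (hS'meas (k+1) hk14)
    set F : ℝ → ℝ≥0∞ := fun x => ENNReal.ofReal (x ^ k) with hFdef
    have hFmeas : Measurable F := ENNReal.measurable_ofReal.comp (measurable_id.pow_const k)
    have hfin : ∫⁻ t in Set.Ioi (1:ℝ), ENNReal.ofReal (t ^ (k+1) * supAbsOn (Vd (k+1)) (Set.Ioi t)) < ⊤ := by
      rw [← hasFiniteIntegral_iff_ofReal ?hnn2]
      case hnn2 =>
        refine (ae_restrict_iff' measurableSet_Ioi).2 (.of_forall fun t ht => ?_)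
        have ht0 : (0:ℝ) < t := lt_trans zero_lt_one ht
        exact mul_nonneg (pow_nonneg ht0.le _) (hS0 (k+1) hk14 t ht0)
      exact hQk1.2
    calc ∫⁻ x in Set.Ioi (1:ℝ), ENNReal.ofReal (x ^ k * supAbsOn (Vd k) (Set.Ioi x))
        ≤ ∫⁻ x in Set.Ioi (1:ℝ), F x * ∫⁻ t in Set.Ioi 1 ∩ Set.Ioi x, G t := by
          refine lintegral_mono_ae ((ae_restrict_iff' measurableSet_Ioi).2
            (.of_forall fun x hx => ?_))
          have hx1 : (1:ℝ) < x := hx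
          have hx0 : (0:ℝ) < x := lt_trans zero_lt_one hx1
          have hIeq : Set.Ioi 1 ∩ Set.Ioi x = Set.Ioi x := by
            rw [Set.inter_eq_self_of_subset_right (Set.Ioi_subset_Ioi hx1.le)]
          rw [hIeq]
          have step1 : ENNReal.ofReal (x ^ k * supAbsOn (Vd k) (Set.Ioi x))
              ≤ F x * ENNReal.ofReal (∫ t in Set.Ioi x, supAbsOn (Vd (k+1)) (Set.Ioi t)) := by
            rw [ENNReal.ofReal_mul (pow_nonneg hx0.le _)]
            exact mul_le_mul_right (ENNReal.ofReal_le_ofReal (hE x hx1)) _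
          refine le_trans step1 ?_
          have step2 : ENNReal.ofReal (∫ t in Set.Ioi x, supAbsOn (Vd (k+1)) (Set.Ioi t))
              = ∫⁻ t in Set.Ioi x, ENNReal.ofReal (supAbsOn (Vd (k+1)) (Set.Ioi t)) := by
            refine ofReal_integral_eq_lintegral_ofReal
              (hSk1int.mono_set (Set.Ioi_subset_Ioi hx1.le)) ?_
            refine (ae_restrict_iff' measurableSet_Ioi).2 (.of_forall fun t ht => ?_)
            exact hS0 (k+1) hk14 t (lt_trans hx0 ht)
          have step3 : ∫⁻ t in Set.Ioi x, ENNReal.ofReal (supAbsOn (Vd (k+1)) (Set.Ioi t))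
              = ∫⁻ t in Set.Ioi x, G t := by
            refine lintegral_congr_ae ((ae_restrict_iff' measurableSet_Ioi).2
              (.of_forall fun t ht => ?_))
            have ht1 : (1:ℝ) < t := lt_trans hx1 ht
            rw [hGdef]
            simp only []
            rw [max_eq_left ht1.le]
          rw [step2, step3]
      _ = ∫⁻ t in Set.Ioi (1:ℝ), G t * ∫⁻ x in Set.Ioi 1 ∩ Set.Iio t, F x :=
          lintegral_swap_triangle (Set.Ioi 1) measurableSet_Ioi F G hFmeas hGmeas
      _ ≤ ∫⁻ t in Set.Ioi (1:ℝ), ENNReal.ofReal (t ^ (k+1) * supAbsOn (Vd (k+1)) (Set.Ioi t)) := by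
          refine lintegral_mono_ae ((ae_restrict_iff' measurableSet_Ioi).2
            (.of_forall fun t ht => ?_))
          have ht1 : (1:ℝ) < t := ht
          have ht0 : (0:ℝ) < t := lt_trans zero_lt_one ht1
          have hinner : ∫⁻ x in Set.Ioi 1 ∩ Set.Iio t, F x ≤ ENNReal.ofReal (t ^ (k+1)) := by
            have hb1 : ∫⁻ x in Set.Ioi 1 ∩ Set.Iio t, F x
                ≤ ∫⁻ _x in Set.Ioi 1 ∩ Set.Iio t, ENNReal.ofReal (t ^ k) := by
              refine lintegral_mono_ae ((ae_restrict_iff'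
                (measurableSet_Ioi.inter measurableSet_Iio)).2 (.of_forall fun x hx => ?_))
              exact ENNReal.ofReal_le_ofReal
                (pow_le_pow_left₀ (le_trans zero_le_one hx.1.le) hx.2.le k)
            refine le_trans hb1 ?_
            rw [setLIntegral_const]
            have hvol : volume (Set.Ioi 1 ∩ Set.Iio t) ≤ ENNReal.ofReal t := by
              rw [Set.Ioi_inter_Iio, Real.volume_Ioo]
              exact ENNReal.ofReal_le_ofReal (by linarith)
            calc ENNReal.ofReal (t ^ k) * volume (Set.Ioi 1 ∩ Set.Iio t)
                ≤ ENNReal.ofReal (t ^ k) * ENNReal.ofReal t := mul_le_mul_right hvol _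
              _ = ENNReal.ofReal (t ^ (k+1)) := by
                  rw [← ENNReal.ofReal_mul (pow_nonneg ht0.le _), ← pow_succ]
          have hGt : G t = ENNReal.ofReal (supAbsOn (Vd (k+1)) (Set.Ioi t)) := by
            rw [hGdef]; simp only []; rw [max_eq_left ht1.le]
          calc G t * ∫⁻ x in Set.Ioi 1 ∩ Set.Iio t, F x
              ≤ ENNReal.ofReal (supAbsOn (Vd (k+1)) (Set.Ioi t)) * ENNReal.ofReal (t ^ (k+1)) := by
                rw [hGt]; exact mul_le_mul_right hinner _
            _ = ENNReal.ofReal (t ^ (k+1) * supAbsOn (Vd (k+1)) (Set.Ioi t)) := by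
                rw [← ENNReal.ofReal_mul (hS0 (k+1) hk14 t ht0), mul_comm]
      _ < ⊤ := hfin
  have hQ3 : IntegrableOn (fun x : ℝ => x ^ 3 * supAbsOn (Vd 3) (Set.Ioi x)) (Set.Ioi 1) := hint3
  have hQ2 := hQstep 2 (by omega) hQ3
  have hQ1 := hQstep 1 (by omega) hQ2
  have hQ0 := hQstep 0 (by omega) hQ1
  have hQ : ∀ k ≤ 3, IntegrableOn (fun x : ℝ => x ^ k * supAbsOn (Vd k) (Set.Ioi x)) (Set.Ioi 1) := by
    intro k hk; interval_cases k
    · exact hQ0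
    · exact hQ1
    · exact hQ2
    · exact hQ3
  -- global versions of S-integrability and envelope bound
  have hSint : ∀ j ≤ 3, IntegrableOn (fun x : ℝ => supAbsOn (Vd j) (Set.Ioi x)) (Set.Ioi 1) := by
    intro j hj
    refine Integrable.mono' (hQ j hj) (hSmeas j (by omega) 1 one_pos) ?_
    refine (ae_restrict_iff' measurableSet_Ioi).2 (.of_forall fun x hx => ?_)
    have hx1 : (1:ℝ) < x := hx
    have hx0 : (0:ℝ) < x := lt_trans zero_lt_one hx1
    have hSnn : 0 ≤ supAbsOn (Vd j) (Set.Ioi x) := hS0 j (by omega) x hx0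
    rw [Real.norm_eq_abs, abs_of_nonneg hSnn]
    calc supAbsOn (Vd j) (Set.Ioi x) = 1 * supAbsOn (Vd j) (Set.Ioi x) := by ring
      _ ≤ x ^ j * supAbsOn (Vd j) (Set.Ioi x) :=
          mul_le_mul_of_nonneg_right (one_le_pow₀ hx1.le) hSnn
  have hE : ∀ k ≤ 2, ∀ x : ℝ, 1 < x → supAbsOn (Vd k) (Set.Ioi x)
      ≤ ∫ t in Set.Ioi x, supAbsOn (Vd (k+1)) (Set.Ioi t) := by
    intro k hk x hx
    have hk14 : k + 1 ≤ 4 := by omega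
    have hSk1int := hSint (k+1) (by omega)
    refine supAbsOn_le fun y hy => ?_
    have hy1 : 1 < y := lt_trans hx hy
    have h1 : |Vd k y| ≤ ∫ t in Set.Ioi y, |Vd (k+1) t| := by
      rw [hrep k hk y hy1.le, abs_neg]
      simpa [Real.norm_eq_abs] using
        norm_integral_le_integral_norm (μ := volume.restrict (Set.Ioi y)) (Vd (k+1))
    have h2 : ∫ t in Set.Ioi y, |Vd (k+1) t|
        ≤ ∫ t in Set.Ioi y, supAbsOn (Vd (k+1)) (Set.Ioi t) := by
      refine setIntegral_mono_on
        (((hinttail (k+1) (by omega)).mono_set (Set.Ioi_subset_Ioi hy1.le)).abs)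
        (hSk1int.mono_set (Set.Ioi_subset_Ioi hy1.le)) measurableSet_Ioi ?_
      intro t ht
      exact hVleS (k+1) hk14 t (lt_trans (lt_trans zero_lt_one hy1) ht)
    have h3 : ∫ t in Set.Ioi y, supAbsOn (Vd (k+1)) (Set.Ioi t)
        ≤ ∫ t in Set.Ioi x, supAbsOn (Vd (k+1)) (Set.Ioi t) := by
      refine setIntegral_mono_set (hSk1int.mono_set (Set.Ioi_subset_Ioi hx.le)) ?_
        (Set.Ioi_subset_Ioi hy.le).eventuallyLE
      refine (ae_restrict_iff' measurableSet_Ioi).2 (.of_forall fun t ht => ?_)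
      exact hS0 (k+1) hk14 t (lt_trans (lt_trans zero_lt_one hx) ht)
    linarith
  intro c hc
  -- (iii)
  have hiii : ∀ k ≤ 3, IntegrableOn (fun x : ℝ => x ^ k * supAbsOn (Vd k) (Set.Ioi x))
      (Set.Ioi c) := by
    intro k hk
    have hk4 : k ≤ 4 := by omega
    set m := max c 1 with hmdef
    have hm1 : (1:ℝ) ≤ m := le_max_right _ _
    have hsub : Set.Ioi c ⊆ Set.Ioc c m ∪ Set.Ioi m := by
      intro x hx
      rcases le_or_gt x m with h | h
      · exact Or.inl ⟨hx, h⟩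
      · exact Or.inr h
    refine IntegrableOn.mono_set (IntegrableOn.union ?_ ?_) hsub
    · refine Integrable.mono' (g := fun _ => m ^ k * supAbsOn (Vd k) (Set.Ioi c)) ?_ ?_ ?_
      · exact integrableOn_const measure_Ioc_lt_top.ne
      · exact (hXSmeas k hk4 k c hc).mono_measure
          (Measure.restrict_mono Set.Ioc_subset_Ioi_self le_rfl)
      · refine (ae_restrict_iff' measurableSet_Ioc).2 (.of_forall fun x hx => ?_)
        have hxc : c < x := hx.1
        have hx0 : 0 < x := lt_trans hc hxc
        have hSnn := hS0 k hk4 x hx0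
        rw [Real.norm_eq_abs, abs_of_nonneg (mul_nonneg (pow_nonneg hx0.le _) hSnn)]
        exact mul_le_mul (pow_le_pow_left₀ hx0.le hx.2 _)
          (supAbsOn_mono hxc.le (hBdd k hk4 c hc)) hSnn (by positivity)
    · exact (hQ k hk).mono_set (Set.Ioi_subset_Ioi hm1)
  -- (iv)
  have hiv : ∀ k ≤ 2, Tendsto (fun x : ℝ => x ^ (k + 1) * supAbsOn (Vd k) (Set.Ioi x))
      atTop (𝓝 0) := by
    intro k hk
    have hk4 : k ≤ 4 := by omega
    have hk14 : k + 1 ≤ 4 := by omega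
    have hQk1 := hQ (k+1) (by omega)
    have htail := tail_tendsto_zero hQk1
    refine squeeze_zero' ?_ ?_ htail
    · filter_upwards [eventually_gt_atTop (1:ℝ)] with x hx
      have hx0 : (0:ℝ) < x := lt_trans zero_lt_one hx
      exact mul_nonneg (pow_nonneg hx0.le _) (hS0 k hk4 x hx0)
    · filter_upwards [eventually_gt_atTop (1:ℝ)] with x hx
      have hx0 : (0:ℝ) < x := lt_trans zero_lt_one hx
      calc x ^ (k+1) * supAbsOn (Vd k) (Set.Ioi x)
          ≤ x ^ (k+1) * ∫ t in Set.Ioi x, supAbsOn (Vd (k+1)) (Set.Ioi t) :=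
            mul_le_mul_of_nonneg_left (hE k hk x hx) (by positivity)
        _ = ∫ t in Set.Ioi x, x ^ (k+1) * supAbsOn (Vd (k+1)) (Set.Ioi t) :=
            (MeasureTheory.integral_const_mul _ _).symm
        _ ≤ ∫ t in Set.Ioi x, t ^ (k+1) * supAbsOn (Vd (k+1)) (Set.Ioi t) := by
            refine setIntegral_mono_on
              (((hSint (k+1) (by omega)).mono_set (Set.Ioi_subset_Ioi hx.le)).const_mul _)
              (hQk1.mono_set (Set.Ioi_subset_Ioi hx.le)) measurableSet_Ioi ?_
            intro t ht
            have ht0 : (0:ℝ) < t := lt_trans hx0 ht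
            exact mul_le_mul_of_nonneg_right (pow_le_pow_left₀ hx0.le (le_of_lt ht) _)
              (hS0 (k+1) hk14 t ht0)
  -- (v)
  have hv : ∀ k ≤ 4, ∃ M : ℝ, ∀ x : ℝ, c < x →
      x ^ (k + 1) * supAbsOn (Vd k) (Set.Ioi x) ≤ M := by
    intro k hk
    obtain ⟨C, hC0, hC⟩ := hD k hk
    set m := max c 1 with hmdef
    refine ⟨max (m ^ (k+1) * supAbsOn (Vd k) (Set.Ioi c)) C, fun x hx => ?_⟩
    rcases le_or_gt x m with h | h
    · refine le_trans ?_ (le_max_left _ _)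
      have hx0 : 0 < x := lt_trans hc hx
      exact mul_le_mul (pow_le_pow_left₀ hx0.le h _)
        (supAbsOn_mono hx.le (hBdd k hk c hc)) (hS0 k hk x hx0) (by positivity)
    · have hx1 : 1 < x := lt_of_le_of_lt (le_max_right c 1) h
      have hx0 : (0:ℝ) < x := lt_trans zero_lt_one hx1
      refine le_trans ?_ (le_max_right _ _)
      calc x ^ (k+1) * supAbsOn (Vd k) (Set.Ioi x)
          ≤ x ^ (k+1) * (C / x ^ (k+1)) :=
            mul_le_mul_of_nonneg_left (hC x hx1) (by positivity)
        _ = C := by field_simp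
  -- integrability of |Vd j| near 0 relative to cutoffs
  have hVabsInt : ∀ j ≤ 4, ∀ x : ℝ, 0 < x → IntegrableOn (fun t => |Vd j t|) (Set.Ioo x 1) := by
    intro j hj x hx
    have hsub : Set.Icc x 1 ⊆ Set.Ioi 0 := fun t ht => lt_of_lt_of_le hx ht.1
    exact (((h0 j hj).mono hsub).abs.integrableOn_Icc).mono_set Set.Ioo_subset_Icc_self
  -- FTC bound near 0
  have hFTC0 : ∀ k ≤ 1, ∀ y : ℝ, 0 < y → y ≤ 1 →
      |Vd k y| ≤ |Vd k 1| + ∫ t in Set.Ioo y 1, |Vd (k+1) t| := by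
    intro k hk y hy0 hy1
    have h1 := hFTC k (by omega) y 1 hy0 hy1
    have h2 : Vd k y = Vd k 1 - ∫ t in y..1, Vd (k+1) t := by rw [h1]; ring
    rw [h2, sub_eq_add_neg]
    refine le_trans (abs_add_le _ _) ?_
    rw [abs_neg]
    refine add_le_add_right ?_ _
    rw [intervalIntegral.integral_of_le hy1]
    calc |∫ t in Set.Ioc y 1, Vd (k+1) t| ≤ ∫ t in Set.Ioc y 1, |Vd (k+1) t| := by
          simpa [Real.norm_eq_abs] using
            norm_integral_le_integral_norm (μ := volume.restrict (Set.Ioc y 1)) (Vd (k+1))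
      _ = ∫ t in Set.Ioo y 1, |Vd (k+1) t| := integral_Ioc_eq_integral_Ioo
  -- measurable representatives of |Vd 1|, |Vd 2| on (0,∞)
  obtain ⟨W1, hW1m, hW1e⟩ := exists_meas_rep (fun t => |Vd 1 t|) ((h0 1 (by omega)).abs)
  obtain ⟨W2, hW2m, hW2e⟩ := exists_meas_rep (fun t => |Vd 2 t|) ((h0 2 (by omega)).abs)
  -- lintegral congruence tool
  have hlcongr : ∀ (u v : ℝ → ℝ≥0∞) (A : Set ℝ), MeasurableSet A → A ⊆ Set.Ioi 0 →
      (∀ᵐ t, t ∈ Set.Ioi (0:ℝ) → u t = v t) →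
      ∫⁻ t in A, u t = ∫⁻ t in A, v t := by
    intro u v A hA hsub hav
    refine lintegral_congr_ae ?_
    have h1 : ∀ᵐ t ∂(volume.restrict A), t ∈ Set.Ioi (0:ℝ) → u t = v t :=
      Filter.Eventually.filter_mono (ae_mono Measure.restrict_le_self) hav
    filter_upwards [h1, ae_restrict_mem hA] with t h1t h2t
    exact h1t (hsub h2t)
  -- conversion of integrals of |Vd j| to lintegrals of the representative
  have hIconv : ∀ (j : ℕ) (hj : j ≤ 4) (W : ℝ → ℝ),
      (∀ᵐ t, t ∈ Set.Ioi (0:ℝ) → W t = |Vd j t|) →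
      ∀ x : ℝ, 0 < x →
      ENNReal.ofReal (∫ t in Set.Ioo x 1, |Vd j t|)
        = ∫⁻ t in Set.Ioo x 1, ENNReal.ofReal (W t) := by
    intro j hj W hWe x hx
    rw [ofReal_integral_eq_lintegral_ofReal (hVabsInt j hj x hx)
      (Filter.Eventually.of_forall fun t => abs_nonneg _)]
    refine hlcongr _ _ _ measurableSet_Ioo (fun t ht => lt_trans hx ht.1) ?_
    filter_upwards [hWe] with t hte htm
    rw [hte htm]
  -- swap bound on (0,1)
  have hswapbd : ∀ (j : ℕ) (W : ℝ → ℝ), Measurable W →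
      (∀ᵐ t, t ∈ Set.Ioi (0:ℝ) → W t = |Vd j t|) → ∀ m : ℕ,
      ∫⁻ x in Set.Ioo (0:ℝ) 1, ENNReal.ofReal (x ^ m) * ∫⁻ t in Set.Ioo x 1, ENNReal.ofReal (W t)
      ≤ ∫⁻ t in Set.Ioo (0:ℝ) 1, ENNReal.ofReal (t ^ (m+1) * |Vd j t|) := by
    intro j W hWm hWe m
    set F : ℝ → ℝ≥0∞ := fun x => ENNReal.ofReal (x ^ m) with hFdef
    have hFmeas : Measurable F := ENNReal.measurable_ofReal.comp (measurable_id.pow_const m)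
    set G : ℝ → ℝ≥0∞ := fun t => ENNReal.ofReal (W t) with hGdef
    have hGmeas : Measurable G := ENNReal.measurable_ofReal.comp hWm
    have hstep1 : ∫⁻ x in Set.Ioo (0:ℝ) 1, F x * ∫⁻ t in Set.Ioo x 1, G t
        = ∫⁻ x in Set.Ioo (0:ℝ) 1, F x * ∫⁻ t in Set.Ioo 0 1 ∩ Set.Ioi x, G t := by
      refine lintegral_congr_ae ((ae_restrict_iff' measurableSet_Ioo).2
        (.of_forall fun x hx => ?_))
      have heq : Set.Ioo (0:ℝ) 1 ∩ Set.Ioi x = Set.Ioo x 1 := by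
        rw [Set.Ioo_inter_Ioi, max_eq_right hx.1.le]
      simp only [heq]
    rw [hstep1, lintegral_swap_triangle (Set.Ioo 0 1) measurableSet_Ioo F G hFmeas hGmeas]
    refine lintegral_mono_ae ?_
    have h1 : ∀ᵐ t ∂(volume.restrict (Set.Ioo (0:ℝ) 1)), t ∈ Set.Ioi (0:ℝ) → W t = |Vd j t| :=
      Filter.Eventually.filter_mono (ae_mono Measure.restrict_le_self) hWe
    filter_upwards [h1, ae_restrict_mem measurableSet_Ioo] with t hte htm
    have ht0 : (0:ℝ) < t := htm.1
    have ht1 : t < 1 := htm.2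
    have hGt : G t = ENNReal.ofReal |Vd j t| := by
      rw [hGdef]; simp only []; rw [hte ht0]
    have hIeq : Set.Ioo (0:ℝ) 1 ∩ Set.Iio t = Set.Ioo 0 t := by
      rw [Set.Ioo_inter_Iio, min_eq_right ht1.le]
    have hinner : ∫⁻ x in Set.Ioo (0:ℝ) 1 ∩ Set.Iio t, F x ≤ ENNReal.ofReal (t ^ (m+1)) := by
      rw [hIeq]
      have hb1 : ∫⁻ x in Set.Ioo (0:ℝ) t, F x ≤ ∫⁻ _x in Set.Ioo (0:ℝ) t, ENNReal.ofReal (t ^ m) := by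
        refine lintegral_mono_ae ((ae_restrict_iff' measurableSet_Ioo).2
          (.of_forall fun x hx => ?_))
        exact ENNReal.ofReal_le_ofReal (pow_le_pow_left₀ hx.1.le hx.2.le m)
      refine le_trans hb1 ?_
      rw [setLIntegral_const, Real.volume_Ioo]
      calc ENNReal.ofReal (t ^ m) * ENNReal.ofReal (t - 0)
          ≤ ENNReal.ofReal (t ^ m) * ENNReal.ofReal t := by
            exact mul_le_mul_right (ENNReal.ofReal_le_ofReal (by linarith)) _
        _ = ENNReal.ofReal (t ^ (m+1)) := by
            rw [← ENNReal.ofReal_mul (pow_nonneg ht0.le _), ← pow_succ]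
    calc G t * ∫⁻ x in Set.Ioo (0:ℝ) 1 ∩ Set.Iio t, F x
        ≤ ENNReal.ofReal |Vd j t| * ENNReal.ofReal (t ^ (m+1)) := by
          rw [hGt]; exact mul_le_mul_right hinner _
      _ = ENNReal.ofReal (t ^ (m+1) * |Vd j t|) := by
          rw [← ENNReal.ofReal_mul (abs_nonneg _), mul_comm]
  -- finiteness from hint2
  have habs2 : ∫⁻ t in Set.Ioo (0:ℝ) 1, ENNReal.ofReal (t ^ 2 * |Vd 2 t|) < ⊤ := by
    have h1 := (hint2.abs).2
    rw [hasFiniteIntegral_iff_ofReal (Filter.Eventually.of_forall fun t => abs_nonneg _)] at h1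
    refine lt_of_le_of_lt (le_of_eq ?_) h1
    refine lintegral_congr_ae ((ae_restrict_iff' measurableSet_Ioo).2
      (.of_forall fun t ht => ?_))
    show ENNReal.ofReal (t ^ 2 * |Vd 2 t|) = ENNReal.ofReal |t ^ 2 * Vd 2 t|
    rw [abs_mul, abs_of_nonneg (by positivity : (0:ℝ) ≤ t ^ 2)]
  -- the key finiteness: ∫⁻ t |Vd 1 t| < ∞ on (0,1)
  have hA1 : ∫⁻ t in Set.Ioo (0:ℝ) 1, ENNReal.ofReal (t * |Vd 1 t|) < ⊤ := by
    have hptw : ∀ᵐ t ∂(volume.restrict (Set.Ioo (0:ℝ) 1)), ENNReal.ofReal (t * |Vd 1 t|)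
        ≤ ENNReal.ofReal |Vd 1 1|
          + ENNReal.ofReal (t ^ 1) * ∫⁻ s in Set.Ioo t 1, ENNReal.ofReal (W2 s) := by
      refine (ae_restrict_iff' measurableSet_Ioo).2 (.of_forall fun t ht => ?_)
      have ht0 : (0:ℝ) < t := ht.1
      have ht1 : t < 1 := ht.2
      have hb := hFTC0 1 le_rfl t ht0 ht1.le
      have hInn : 0 ≤ ∫ s in Set.Ioo t 1, |Vd 2 s| :=
        setIntegral_nonneg measurableSet_Ioo fun s _ => abs_nonneg _
      have hr : t * |Vd 1 t| ≤ |Vd 1 1| + t * ∫ s in Set.Ioo t 1, |Vd 2 s| := by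
        nlinarith [abs_nonneg (Vd 1 t), abs_nonneg (Vd 1 1)]
      calc ENNReal.ofReal (t * |Vd 1 t|)
          ≤ ENNReal.ofReal (|Vd 1 1| + t * ∫ s in Set.Ioo t 1, |Vd 2 s|) :=
            ENNReal.ofReal_le_ofReal hr
        _ = ENNReal.ofReal |Vd 1 1|
            + ENNReal.ofReal t * ENNReal.ofReal (∫ s in Set.Ioo t 1, |Vd 2 s|) := by
            rw [ENNReal.ofReal_add (abs_nonneg _) (mul_nonneg ht0.le hInn),
              ENNReal.ofReal_mul ht0.le]
        _ = ENNReal.ofReal |Vd 1 1|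
            + ENNReal.ofReal (t ^ 1) * ∫⁻ s in Set.Ioo t 1, ENNReal.ofReal (W2 s) := by
            rw [hIconv 2 (by omega) W2 hW2e t ht0, pow_one]
    calc ∫⁻ t in Set.Ioo (0:ℝ) 1, ENNReal.ofReal (t * |Vd 1 t|)
        ≤ ∫⁻ t in Set.Ioo (0:ℝ) 1, (ENNReal.ofReal |Vd 1 1|
            + ENNReal.ofReal (t ^ 1) * ∫⁻ s in Set.Ioo t 1, ENNReal.ofReal (W2 s)) :=
          lintegral_mono_ae hptw
      _ = (∫⁻ _t in Set.Ioo (0:ℝ) 1, ENNReal.ofReal |Vd 1 1|)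
          + ∫⁻ t in Set.Ioo (0:ℝ) 1, ENNReal.ofReal (t ^ 1)
            * ∫⁻ s in Set.Ioo t 1, ENNReal.ofReal (W2 s) :=
          lintegral_add_left measurable_const _
      _ ≤ ENNReal.ofReal |Vd 1 1| * volume (Set.Ioo (0:ℝ) 1)
          + ∫⁻ t in Set.Ioo (0:ℝ) 1, ENNReal.ofReal (t ^ (1+1) * |Vd 2 t|) := by
          rw [setLIntegral_const]
          exact add_le_add_right (hswapbd 2 W2 hW2m hW2e 1) _
      _ < ⊤ := by
          refine ENNReal.add_lt_top.2 ⟨?_, by simpa using habs2⟩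
          rw [Real.volume_Ioo]
          exact ENNReal.mul_lt_top ENNReal.ofReal_lt_top ENNReal.ofReal_lt_top
  -- (ii)
  have hii : ∀ k ≤ 1, Tendsto (fun x : ℝ => x ^ (k + 1) * supAbsOn (Vd k) (Set.Ioi x))
      (𝓝[>] (0:ℝ)) (𝓝 0) := by
    intro k hk
    have hk4 : k ≤ 4 := by omega
    have hk14 : k + 1 ≤ 4 := by omega
    set A := supAbsOn (Vd k) (Set.Ioi 1) + |Vd k 1| with hAdef
    have hS1nn : 0 ≤ supAbsOn (Vd k) (Set.Ioi 1) := hS0 k hk4 1 one_pos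
    have hA0 : 0 ≤ A := add_nonneg hS1nn (abs_nonneg _)
    have hbound : ∀ x ∈ Set.Ioo (0:ℝ) 1, supAbsOn (Vd k) (Set.Ioi x)
        ≤ A + ∫ t in Set.Ioo x 1, |Vd (k+1) t| := by
      intro x hx
      have hInn : 0 ≤ ∫ t in Set.Ioo x 1, |Vd (k+1) t| :=
        setIntegral_nonneg measurableSet_Ioo fun t _ => abs_nonneg _
      refine supAbsOn_le fun y hy => ?_
      rcases le_or_gt y 1 with h1 | h1
      · have hy0 : 0 < y := lt_trans hx.1 hy
        refine le_trans (hFTC0 k hk y hy0 h1) ?_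
        have hmono : ∫ t in Set.Ioo y 1, |Vd (k+1) t| ≤ ∫ t in Set.Ioo x 1, |Vd (k+1) t| := by
          refine setIntegral_mono_set (hVabsInt (k+1) hk14 x hx.1) ?_
            (Set.Ioo_subset_Ioo_left hy.le).eventuallyLE
          exact (ae_restrict_iff' measurableSet_Ioo).2 (.of_forall fun t _ => abs_nonneg _)
        rw [hAdef]; linarith
      · have hyS : |Vd k y| ≤ supAbsOn (Vd k) (Set.Ioi 1) :=
          le_supAbsOn h1 (hBdd k hk4 1 one_pos)
        rw [hAdef]; linarith [abs_nonneg (Vd k 1)]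
    have hgint : IntegrableOn (fun t : ℝ => t ^ (k+1) * |Vd (k+1) t|) (Set.Ioo 0 1) := by
      rcases Nat.eq_zero_or_pos k with hk0 | hkpos
      · subst hk0
        refine ⟨((continuous_pow 1).continuousOn.mul
          ((h0 1 (by omega)).abs.mono (fun t ht => ht.1))).aestronglyMeasurable
            measurableSet_Ioo, ?_⟩
        rw [hasFiniteIntegral_iff_ofReal ((ae_restrict_iff' measurableSet_Ioo).2
          (.of_forall fun t ht => mul_nonneg (pow_nonneg ht.1.le _) (abs_nonneg _)))]
        refine lt_of_le_of_lt (le_of_eq (lintegral_congr_ae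
          ((ae_restrict_iff' measurableSet_Ioo).2 (.of_forall fun t ht => ?_)))) hA1
        show ENNReal.ofReal (t ^ 1 * |Vd 1 t|) = ENNReal.ofReal (t * |Vd 1 t|)
        rw [pow_one]
      · have hk1 : k = 1 := by omega
        subst hk1
        refine (hint2.abs).congr ?_
        refine (ae_restrict_iff' measurableSet_Ioo).2 (.of_forall fun t ht => ?_)
        show |t ^ 2 * Vd 2 t| = t ^ (1+1) * |Vd 2 t|
        rw [abs_mul, abs_of_nonneg (by positivity : (0:ℝ) ≤ t ^ 2)]
    have hZ := tendsto_pow_mul_integral_tail_zero (m := k+1) (by omega)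
      hgint (fun x hx => hVabsInt (k+1) hk14 x hx.1)
      (fun t _ => abs_nonneg _) (fun t _ => le_refl _)
    have hAx : Tendsto (fun x : ℝ => x ^ (k+1) * A) (𝓝[>] (0:ℝ)) (𝓝 0) := by
      have hcontA : Tendsto (fun x : ℝ => x ^ (k+1) * A) (𝓝 0) (𝓝 ((0:ℝ) ^ (k+1) * A)) :=
        ((continuous_pow (k+1)).mul continuous_const).tendsto 0
      rw [zero_pow (by omega), zero_mul] at hcontA
      exact hcontA.mono_left nhdsWithin_le_nhds
    have hsum : Tendsto (fun x : ℝ => x ^ (k+1) * A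
        + x ^ (k+1) * ∫ t in Set.Ioo x 1, |Vd (k+1) t|) (𝓝[>] (0:ℝ)) (𝓝 0) := by
      simpa using hAx.add hZ
    refine squeeze_zero' ?_ ?_ hsum
    · filter_upwards [Ioo_mem_nhdsGT_of_mem ⟨le_refl (0:ℝ), zero_lt_one⟩] with x hx
      exact mul_nonneg (pow_nonneg hx.1.le _) (hS0 k hk4 x hx.1)
    · filter_upwards [Ioo_mem_nhdsGT_of_mem ⟨le_refl (0:ℝ), zero_lt_one⟩] with x hx
      calc x ^ (k+1) * supAbsOn (Vd k) (Set.Ioi x)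
          ≤ x ^ (k+1) * (A + ∫ t in Set.Ioo x 1, |Vd (k+1) t|) :=
            mul_le_mul_of_nonneg_left (hbound x hx) (pow_nonneg hx.1.le _)
        _ = x ^ (k+1) * A + x ^ (k+1) * ∫ t in Set.Ioo x 1, |Vd (k+1) t| := by ring
  -- (i)
  have hi : ∀ k ≤ 1, IntegrableOn (fun x : ℝ => x ^ k * Vd k x) (Set.Ioi 0) := by
    intro k hk
    have hk4 : k ≤ 4 := by omega
    have hsub : Set.Ioi (0:ℝ) ⊆ Set.Ioo 0 1 ∪ Set.Ici 1 := by
      intro x hx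
      rcases lt_or_ge x 1 with h | h
      · exact Or.inl ⟨hx, h⟩
      · exact Or.inr h
    refine IntegrableOn.mono_set (IntegrableOn.union ?_ ?_) hsub
    · refine ⟨((continuous_pow k).continuousOn.mul ((h0 k hk4).mono
        (fun t ht => ht.1))).aestronglyMeasurable measurableSet_Ioo, ?_⟩
      rw [hasFiniteIntegral_iff_norm]
      rcases Nat.eq_zero_or_pos k with hk0 | hkpos
      · subst hk0
        calc ∫⁻ x in Set.Ioo (0:ℝ) 1, ENNReal.ofReal ‖x ^ 0 * Vd 0 x‖
            ≤ ∫⁻ x in Set.Ioo (0:ℝ) 1, (ENNReal.ofReal |Vd 0 1|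
                + ENNReal.ofReal ((x:ℝ) ^ 0) * ∫⁻ t in Set.Ioo x 1, ENNReal.ofReal (W1 t)) := by
              refine lintegral_mono_ae ((ae_restrict_iff' measurableSet_Ioo).2
                (.of_forall fun x hx => ?_))
              have hx0 : (0:ℝ) < x := hx.1
              have hb := hFTC0 0 (by omega) x hx0 hx.2.le
              have hInn : 0 ≤ ∫ t in Set.Ioo x 1, |Vd 1 t| :=
                setIntegral_nonneg measurableSet_Ioo fun t _ => abs_nonneg _
              calc ENNReal.ofReal ‖x ^ 0 * Vd 0 x‖ = ENNReal.ofReal |Vd 0 x| := by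
                    rw [Real.norm_eq_abs, pow_zero, one_mul]
                _ ≤ ENNReal.ofReal (|Vd 0 1| + ∫ t in Set.Ioo x 1, |Vd 1 t|) :=
                    ENNReal.ofReal_le_ofReal hb
                _ = ENNReal.ofReal |Vd 0 1|
                    + ENNReal.ofReal ((x:ℝ) ^ 0) * ∫⁻ t in Set.Ioo x 1, ENNReal.ofReal (W1 t) := by
                    rw [ENNReal.ofReal_add (abs_nonneg _) hInn,
                      hIconv 1 (by omega) W1 hW1e x hx0, pow_zero, ENNReal.ofReal_one, one_mul]
          _ = (∫⁻ _x in Set.Ioo (0:ℝ) 1, ENNReal.ofReal |Vd 0 1|)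
              + ∫⁻ x in Set.Ioo (0:ℝ) 1, ENNReal.ofReal ((x:ℝ) ^ 0)
                * ∫⁻ t in Set.Ioo x 1, ENNReal.ofReal (W1 t) :=
              lintegral_add_left measurable_const _
          _ ≤ ENNReal.ofReal |Vd 0 1| * volume (Set.Ioo (0:ℝ) 1)
              + ∫⁻ t in Set.Ioo (0:ℝ) 1, ENNReal.ofReal (t ^ (0+1) * |Vd 1 t|) := by
              rw [setLIntegral_const]
              exact add_le_add_right (hswapbd 1 W1 hW1m hW1e 0) _
          _ < ⊤ := by
              refine ENNReal.add_lt_top.2 ⟨?_, ?_⟩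
              · rw [Real.volume_Ioo]
                exact ENNReal.mul_lt_top ENNReal.ofReal_lt_top ENNReal.ofReal_lt_top
              · refine lt_of_le_of_lt (le_of_eq (lintegral_congr_ae
                  ((ae_restrict_iff' measurableSet_Ioo).2 (.of_forall fun t ht => ?_)))) hA1
                show ENNReal.ofReal (t ^ (0+1) * |Vd 1 t|) = ENNReal.ofReal (t * |Vd 1 t|)
                rw [pow_one]
      · have hk1 : k = 1 := by omega
        subst hk1
        refine lt_of_le_of_lt (le_of_eq (lintegral_congr_ae
          ((ae_restrict_iff' measurableSet_Ioo).2 (.of_forall fun x hx => ?_)))) hA1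
        show ENNReal.ofReal ‖x ^ 1 * Vd 1 x‖ = ENNReal.ofReal (x * |Vd 1 x|)
        rw [Real.norm_eq_abs, pow_one, abs_mul, abs_of_nonneg hx.1.le]
    · rw [← Set.Ioi_insert, Set.insert_eq]
      refine IntegrableOn.union ?_ ?_
      · rw [IntegrableOn, Measure.restrict_eq_zero.2 (by simp)]
        exact integrable_zero_measure
      · refine Integrable.mono' (hQ k (by omega)) ?_ ?_
        · exact ((continuous_pow k).continuousOn.mul ((h0 k hk4).mono
            (show Set.Ioi (1:ℝ) ⊆ Set.Ioi 0 from Set.Ioi_subset_Ioi zero_le_one))).aestronglyMeasurable measurableSet_Ioi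
        · refine (ae_restrict_iff' measurableSet_Ioi).2 (.of_forall fun x hx => ?_)
          have hx1 : (1:ℝ) < x := hx
          have hx0 : (0:ℝ) < x := lt_trans zero_lt_one hx1
          rw [Real.norm_eq_abs, abs_mul, abs_of_nonneg (pow_nonneg hx0.le _)]
          exact mul_le_mul_of_nonneg_left (hVleS k hk4 x hx0) (pow_nonneg hx0.le _)
  exact ⟨hi, hii, hiii, hiv, hv⟩
end

section
/- Let V : (0,∞) → ℝ be twice continuously differentiable with V''(z) ≥ 0 for all z > 0, define 𝕍₂(x) := sup_{y ∈ (x,∞)} |V''(y)|, and assume that 𝕍₂(x) < ∞ for every x > 0 and that z ↦ z²·𝕍₂(z) is Lebesgue integrable on (1,∞). Then for every x > 0 the series Ψ(x) := Σ_{k=1}^{∞} k²·V''(kx) converges, and for every R > 1 the partial sums x ↦ Σ_{k=1}^{n} k²·V''(kx) converge uniformly on the interval [1/R, R] as n → ∞. -/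
open MeasureTheory Set

private lemma cube_bound {a t : ℝ} (ha : 0 < a) :
    a ^ 3 * t ^ 2 / 4 ≤ ((t * a) ^ 3 - ((t - 1) * a) ^ 3) / 3 := by
  nlinarith [mul_nonneg (pow_pos ha 3).le (sq_nonneg (3 * t - 2))]

set_option maxHeartbeats 1000000 in
/-- Summability of `k ↦ k² W(k a)` for `W` nonnegative antitone on `(0,∞)` with
`z ↦ z² W z` integrable on `(1,∞)`. -/
lemma aux_summable (W : ℝ → ℝ)
    (hmono : ∀ x y : ℝ, 0 < x → x ≤ y → W y ≤ W x)
    (hnn : ∀ x : ℝ, 0 < x → 0 ≤ W x)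
    (hint : MeasureTheory.IntegrableOn (fun z : ℝ => z ^ 2 * W z) (Set.Ioi 1))
    (a : ℝ) (ha : 0 < a) :
    Summable (fun k : ℕ => (k : ℝ) ^ 2 * W (k * a)) := by
  set k₀ : ℕ := ⌈1 / a⌉₊ + 1 with hk₀
  have hk₀a : 1 ≤ (k₀ : ℝ) * a := by
    have h1 : (1 / a : ℝ) ≤ (⌈1 / a⌉₊ : ℝ) := Nat.le_ceil _
    have : (1 / a) * a ≤ (k₀ : ℝ) * a := by
      apply mul_le_mul_of_nonneg_right _ ha.le
      push_cast [hk₀]; linarith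
    rwa [one_div, inv_mul_cancel₀ (ne_of_gt ha)] at this
  -- the intervals
  set c : ℕ → ℝ := fun j => ((j : ℝ) + k₀) * a with hc
  set s : ℕ → Set ℝ := fun j => Set.Ioc (c j) (c (j + 1)) with hs
  have hcmono : StrictMono c := by
    intro i j hij
    simp only [hc]
    have : (i : ℝ) < j := by exact_mod_cast hij
    nlinarith
  have hsub : ∀ j, s j ⊆ Set.Ioi (1 : ℝ) := by
    intro j z hz
    have h1 : (1 : ℝ) ≤ c j := by
      have : c 0 ≤ c j := hcmono.monotone (Nat.zero_le j)
      simp only [hc] at this ⊢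
      have : (k₀ : ℝ) * a ≤ ((j : ℝ) + k₀) * a := by
        apply mul_le_mul_of_nonneg_right _ ha.le
        have hj : (0:ℝ) ≤ (j : ℝ) := Nat.cast_nonneg j
        linarith
      linarith [hk₀a]
    exact lt_of_le_of_lt h1 hz.1
  have hdisj : Pairwise (Function.onFun Disjoint s) := by
    intro i j hij
    simp only [Function.onFun, hs, Set.Ioc_disjoint_Ioc]
    rcases lt_or_gt_of_ne hij with h | h
    · exact le_trans (min_le_left _ _) (le_max_of_le_right (hcmono.monotone h))
    · exact le_trans (min_le_right _ _) (le_max_of_le_left (hcmono.monotone h))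
  have hintU : MeasureTheory.IntegrableOn (fun z : ℝ => z ^ 2 * W z) (⋃ j, s j) :=
    hint.mono_set (Set.iUnion_subset hsub)
  have hSum : Summable (fun j : ℕ => ∫ z in s j, z ^ 2 * W z) :=
    (MeasureTheory.hasSum_integral_iUnion (fun j => measurableSet_Ioc) hdisj hintU).summable
  -- comparison of terms
  have key : ∀ j : ℕ, ((j + k₀ + 1 : ℕ) : ℝ) ^ 2 * W ((j + k₀ + 1 : ℕ) * a)
      ≤ (4 / a ^ 3) * ∫ z in s j, z ^ 2 * W z := by
    intro j
    set n : ℕ := j + k₀ + 1 with hn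
    clear_value n
    have hcj : c j = ((n : ℝ) - 1) * a := by push_cast [hc, hn]; ring
    have hcj1 : c (j + 1) = (n : ℝ) * a := by push_cast [hc, hn]; ring
    have hn2 : (2 : ℝ) ≤ (n : ℝ) := by
      have : 2 ≤ n := by omega
      exact_mod_cast this
    have hcjpos : 0 < c j := by rw [hcj]; nlinarith
    have hWnn : 0 ≤ W ((n : ℝ) * a) := hnn _ (by nlinarith)
    -- lower bound for the integral
    have hci : c j ≤ c (j + 1) := (hcmono (Nat.lt_succ_self j)).le
    have hintOn : MeasureTheory.IntegrableOn (fun z : ℝ => z ^ 2 * W z) (s j) :=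
      hint.mono_set (hsub j)
    have hintConst : MeasureTheory.IntegrableOn (fun z : ℝ => z ^ 2 * W ((n : ℝ) * a)) (s j) := by
      exact ((continuous_pow 2).mul continuous_const).integrableOn_Ioc
    have hmono' : ∀ z ∈ s j, z ^ 2 * W ((n : ℝ) * a) ≤ z ^ 2 * W z := by
      intro z hz
      have hz0 : 0 < z := lt_trans hcjpos hz.1
      have : W ((n : ℝ) * a) ≤ W z := hmono z ((n : ℝ) * a) hz0 (by rw [← hcj1]; exact hz.2)
      nlinarith
    have hIle : ∫ z in s j, z ^ 2 * W ((n : ℝ) * a) ≤ ∫ z in s j, z ^ 2 * W z :=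
      MeasureTheory.setIntegral_mono_on hintConst hintOn measurableSet_Ioc hmono'
    have hIconst : ∫ z in s j, z ^ 2 * W ((n : ℝ) * a)
        = ((c (j+1)) ^ 3 - (c j) ^ 3) / 3 * W ((n : ℝ) * a) := by
      rw [MeasureTheory.integral_mul_const, ← intervalIntegral.integral_of_le hci,
        integral_pow]
      norm_num
    have hcube : a ^ 3 * (n : ℝ) ^ 2 / 4 ≤ ((c (j+1)) ^ 3 - (c j) ^ 3) / 3 := by
      rw [hcj, hcj1]; exact cube_bound ha
    have h1 : (n : ℝ) ^ 2 * W ((n : ℝ) * a)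
        ≤ (4 / a ^ 3) * (((c (j+1)) ^ 3 - (c j) ^ 3) / 3 * W ((n : ℝ) * a)) := by
      have ha3 : (0:ℝ) < a ^ 3 := pow_pos ha 3
      rw [← mul_assoc]
      apply mul_le_mul_of_nonneg_right _ hWnn
      rw [div_mul_eq_mul_div, le_div_iff₀ ha3]
      linarith [hcube]
    refine h1.trans ?_
    rw [← hIconst]
    apply mul_le_mul_of_nonneg_left hIle (by positivity)
  -- conclude
  rw [← summable_nat_add_iff (k₀ + 1)]
  apply Summable.of_nonneg_of_le
  · intro j
    have h0 : 0 < j + (k₀ + 1) := by omega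
    have h1 : (0:ℝ) < ((j + (k₀ + 1) : ℕ) : ℝ) := by exact_mod_cast h0
    exact mul_nonneg (by positivity) (hnn _ (by positivity))
  · intro j
    have := key j
    convert this using 2 <;> push_cast <;> ring
  · exact hSum.mul_left (4 / a ^ 3)

/-- Uniform-convergence part of Lemma 4.7: for `V` `C²` on `(0,∞)` with `V'' ≥ 0`, if
`𝕍₂(x) = sup_{y > x} |V''(y)|` is finite for all `x > 0` and `z ↦ z² 𝕍₂(z)` is integrable
on `(1,∞)`, then `Ψ(x) = Σ_{k≥1} k² V''(kx)` converges for every `x > 0`, and its partial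
sums converge uniformly on `[1/R, R]` for every `R > 1`. -/
theorem stmt13 (V V' V'' : ℝ → ℝ)
    (hderiv1 : ∀ z : ℝ, 0 < z → HasDerivAt V (V' z) z)
    (hderiv2 : ∀ z : ℝ, 0 < z → HasDerivAt V' (V'' z) z)
    (hcont : ContinuousOn V'' (Set.Ioi 0))
    (hconv : ∀ z : ℝ, 0 < z → 0 ≤ V'' z)
    (𝕍₂ : ℝ → ℝ) (h𝕍 : ∀ x : ℝ, 𝕍₂ x = sSup ((fun y : ℝ => |V'' y|) '' Set.Ioi x))
    (hfin : ∀ x : ℝ, 0 < x → BddAbove ((fun y : ℝ => |V'' y|) '' Set.Ioi x))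
    (hint : MeasureTheory.IntegrableOn (fun z : ℝ => z ^ 2 * 𝕍₂ z) (Set.Ioi 1)) :
    (∀ x : ℝ, 0 < x → Summable (fun k : ℕ => (k : ℝ) ^ 2 * V'' (k * x))) ∧
    (∀ R : ℝ, 1 < R →
      TendstoUniformlyOn
        (fun n : ℕ => fun x : ℝ => ∑ k ∈ Finset.range n, (k : ℝ) ^ 2 * V'' (k * x))
        (fun x : ℝ => ∑' k : ℕ, (k : ℝ) ^ 2 * V'' (k * x))
        Filter.atTop (Set.Icc (1 / R) R)) := by
  -- basic properties of 𝕍₂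
  have hbound : ∀ t y : ℝ, 0 < t → t < y → |V'' y| ≤ 𝕍₂ t := by
    intro t y ht hty
    rw [h𝕍 t]
    exact le_csSup (hfin t ht) ⟨y, hty, rfl⟩
  have hnn : ∀ x : ℝ, 0 < x → 0 ≤ 𝕍₂ x :=
    fun x hx => le_trans (abs_nonneg _) (hbound x (x + 1) hx (by linarith))
  have hmono : ∀ x y : ℝ, 0 < x → x ≤ y → 𝕍₂ y ≤ 𝕍₂ x := by
    intro x y hx hxy
    rw [h𝕍 x, h𝕍 y]
    apply csSup_le_csSup (hfin x hx)
    · exact ⟨|V'' (y + 1)|, ⟨y + 1, by simp, rfl⟩⟩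
    · exact Set.image_mono (Set.Ioi_subset_Ioi hxy)
  -- the key bound: for 0 < a < x, k² V''(kx) ≤ k² 𝕍₂(ka)
  have hterm : ∀ (a x : ℝ), 0 < a → a < x → ∀ k : ℕ,
      ‖(k : ℝ) ^ 2 * V'' (k * x)‖ ≤ (k : ℝ) ^ 2 * 𝕍₂ (k * a) := by
    intro a x ha hax k
    rcases Nat.eq_zero_or_pos k with hk | hk
    · simp [hk]
    · have hkpos : (0 : ℝ) < k := by exact_mod_cast hk
      have h1 : (0:ℝ) < k * a := by positivity
      have h2 : (k : ℝ) * a < k * x := by nlinarith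
      have := hbound (k * a) (k * x) h1 h2
      rw [norm_mul, Real.norm_eq_abs, Real.norm_eq_abs, abs_pow, Nat.abs_cast]
      exact mul_le_mul_of_nonneg_left this (by positivity)
  constructor
  · intro x hx
    apply Summable.of_norm
    have hsum := aux_summable 𝕍₂ hmono hnn hint (x / 2) (by linarith)
    exact Summable.of_nonneg_of_le (fun k => norm_nonneg _)
      (fun k => hterm (x / 2) x (by linarith) (by linarith) k) hsum
  · intro R hR
    have hR0 : (0:ℝ) < R := by linarith
    have ha : (0:ℝ) < 1 / (2 * R) := by positivity
    have hsum := aux_summable 𝕍₂ hmono hnn hint (1 / (2 * R)) ha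
    apply tendstoUniformlyOn_tsum_nat hsum
    intro k x hx
    apply hterm (1 / (2 * R)) x ha _ k
    calc (1 : ℝ) / (2 * R) < 1 / R := by
          apply div_lt_div_of_pos_left one_pos hR0; linarith
      _ ≤ x := hx.1
end

section
/- Let V : (0,∞) → ℝ be twice continuously differentiable with V''(z) ≥ 0 for all z > 0, define 𝕍₂(x) := sup_{y ∈ (x,∞)} |V''(y)|, and assume that 𝕍₂(x) < ∞ for every x > 0 and that z ↦ z²·𝕍₂(z) is Lebesgue integrable on (1,∞). Then there exists a constant C > 0 such that for all y ∈ (0,1): Σ_{k=1}^{∞} (k²/y²)·V''(k/y) ≤ C·y. In particular, the function f₃ defined by f₃(y) := (1/y²)·Σ_{k=1}^{∞} k² V''(k/y) for y ≠ 0 and f₃(0) := 0 satisfies f₃ ≥ 0 and is continuous at 0. -/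
open MeasureTheory

/-- Nonnegativity and continuity-at-zero part of Lemma 4.7 (with `β = 1`): under the
assumptions on `V''` (even, nonnegative on `(0,∞)`, with finite sup-envelope `𝕍₂` such that
`z² 𝕍₂(z)` is integrable on `(1,∞)`), there is `C > 0` with
`Σ_{k≥1} (k²/y²) V''(k/y) ≤ C y` for all `y ∈ (0,1)`; consequently the diffusion
coefficient `f₃` is nonnegative and continuous at `0`. -/
theorem stmt14 (V V' V'' : ℝ → ℝ)
    (hderiv1 : ∀ z : ℝ, 0 < z → HasDerivAt V (V' z) z)
    (hderiv2 : ∀ z : ℝ, 0 < z → HasDerivAt V' (V'' z) z)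
    (hcont : ContinuousOn V'' (Set.Ioi 0))
    (hconv : ∀ z : ℝ, 0 < z → 0 ≤ V'' z)
    (heven : ∀ z : ℝ, V'' (-z) = V'' z)
    (𝕍₂ : ℝ → ℝ) (h𝕍 : ∀ x : ℝ, 𝕍₂ x = sSup ((fun y : ℝ => |V'' y|) '' Set.Ioi x))
    (hfin : ∀ x : ℝ, 0 < x → BddAbove ((fun y : ℝ => |V'' y|) '' Set.Ioi x))
    (hint : MeasureTheory.IntegrableOn (fun z : ℝ => z ^ 2 * 𝕍₂ z) (Set.Ioi 1))
    (f₃ : ℝ → ℝ)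
    (hf₃ : ∀ y : ℝ, y ≠ 0 → f₃ y = (1 / y ^ 2) * ∑' k : ℕ, ((k : ℝ) + 1) ^ 2 * V'' (((k : ℝ) + 1) / y))
    (hf₃0 : f₃ 0 = 0) :
    (∃ C : ℝ, 0 < C ∧ ∀ y : ℝ, 0 < y → y < 1 →
      ∑' k : ℕ, ((k : ℝ) + 1) ^ 2 / y ^ 2 * V'' (((k : ℝ) + 1) / y) ≤ C * y) ∧
    (∀ y : ℝ, 0 ≤ f₃ y) ∧ ContinuousAt f₃ 0 := by
  classical
  -- basic facts about the envelope 𝕍₂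
  have h𝕍ge : ∀ z w : ℝ, 0 < z → z < w → V'' w ≤ 𝕍₂ z := by
    intro z w hz hzw
    rw [h𝕍 z]
    calc V'' w ≤ |V'' w| := le_abs_self _
      _ ≤ _ := le_csSup (hfin z hz) ⟨w, hzw, rfl⟩
  have h𝕍nonneg : ∀ x : ℝ, 0 < x → 0 ≤ 𝕍₂ x := by
    intro x hx
    have h1 := h𝕍ge x (x + 1) hx (by linarith)
    have h2 := hconv (x + 1) (by linarith)
    linarith
  have h𝕍anti : ∀ x₁ x₂ : ℝ, 0 < x₁ → x₁ ≤ x₂ → 𝕍₂ x₂ ≤ 𝕍₂ x₁ := by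
    intro x₁ x₂ h1 h12
    rw [h𝕍 x₁, h𝕍 x₂]
    refine csSup_le_csSup (hfin x₁ h1) ?_ (Set.image_mono  (Set.Ioi_subset_Ioi h12))
    exact (Set.nonempty_Ioi (a := x₂)).image _
  -- the integrand
  set g : ℝ → ℝ := fun z => z ^ 2 * 𝕍₂ z with hg
  have hmaxanti : Antitone (fun x : ℝ => 𝕍₂ (max x (1/2))) := by
    intro a b hab
    exact h𝕍anti _ _ (lt_of_lt_of_le (by norm_num) (le_max_right a _))
      (max_le_max hab le_rfl)
  have hg'meas : Measurable (fun x : ℝ => x ^ 2 * 𝕍₂ (max x (1/2))) :=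
    (measurable_id.pow_const 2).mul hmaxanti.measurable
  have hgIoc : IntegrableOn g (Set.Ioc (1/2 : ℝ) 1) := by
    have hb : IntegrableOn (fun x : ℝ => x ^ 2 * 𝕍₂ (max x (1/2))) (Set.Ioc (1/2:ℝ) 1) := by
      apply Measure.integrableOn_of_bounded (M := 𝕍₂ (1/2))
        (by simp [Real.volume_Ioc]) hg'meas.aestronglyMeasurable
      refine (ae_restrict_iff' measurableSet_Ioc).mpr (Filter.Eventually.of_forall ?_)
      intro x hx
      have hx1 : (1/2:ℝ) < x := hx.1
      have hx2 : x ≤ 1 := hx.2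
      have hxm : max x (1/2) = x := max_eq_left hx1.le
      have hnn : 0 ≤ 𝕍₂ x := h𝕍nonneg x (by linarith)
      have hle : 𝕍₂ x ≤ 𝕍₂ (1/2) := h𝕍anti _ _ (by norm_num) hx1.le
      rw [Real.norm_eq_abs, hxm, abs_of_nonneg (by positivity)]
      have hx2' : x ^ 2 ≤ 1 := by nlinarith
      calc x ^ 2 * 𝕍₂ x ≤ 1 * 𝕍₂ x := mul_le_mul_of_nonneg_right hx2' hnn
        _ ≤ 𝕍₂ (1/2) := by linarith
    refine hb.congr_fun (fun x hx => ?_) measurableSet_Ioc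
    show x ^ 2 * 𝕍₂ (max x (1/2)) = x ^ 2 * 𝕍₂ x
    rw [max_eq_left hx.1.le]
  have hgIoi : IntegrableOn g (Set.Ioi (1/2 : ℝ)) := by
    have h := hgIoc.union hint
    rwa [Set.Ioc_union_Ioi_eq_Ioi (by norm_num : (1/2:ℝ) ≤ 1)] at h
  have hgnn : ∀ z ∈ Set.Ioi (1/2:ℝ), 0 ≤ g z := by
    intro z hz
    exact mul_nonneg (sq_nonneg z) (h𝕍nonneg z (lt_trans (by norm_num) hz))
  set Itot : ℝ := ∫ z in Set.Ioi (1/2:ℝ), g z with hItot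
  have hInn : 0 ≤ Itot := setIntegral_nonneg measurableSet_Ioi hgnn
  set C : ℝ := 16 * Itot + 1 with hCdef
  have hCpos : 0 < C := by rw [hCdef]; linarith
  -- the key estimate
  have key : ∀ y : ℝ, 0 < y → y < 1 →
      ∑' k : ℕ, ((k : ℝ) + 1) ^ 2 / y ^ 2 * V'' (((k : ℝ) + 1) / y) ≤ C * y := by
    intro y hy hy1
    set J : ℕ → Set ℝ := fun k => Set.Ioc (((k:ℝ) + 1/2)/y) (((k:ℝ) + 3/4)/y) with hJ
    have hJsub : ∀ k, J k ⊆ Set.Ioi (1/2:ℝ) := by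
      intro k z hz
      have hk0 : (0:ℝ) ≤ (k:ℝ) := Nat.cast_nonneg k
      have h12 : (1/2:ℝ) < ((k:ℝ) + 1/2)/y := by
        rw [lt_div_iff₀ hy]; nlinarith
      exact Set.mem_Ioi.mpr (lt_trans h12 hz.1)
    have hJint : ∀ k, IntegrableOn g (J k) := fun k => hgIoi.mono_set (hJsub k)
    have hJmeas : ∀ k, MeasurableSet (J k) := fun k => measurableSet_Ioc
    set c : ℕ → ℝ := fun k => ∫ z in J k, g z with hc
    have hcnn : ∀ k, 0 ≤ c k := fun k =>
      setIntegral_nonneg (hJmeas k) (fun z hz => hgnn z (hJsub k hz))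
    -- termwise comparison with the local integral
    have hterm : ∀ k : ℕ, ((k : ℝ) + 1) ^ 2 / y ^ 2 * V'' (((k : ℝ) + 1) / y)
        ≤ 16 * y * c k := by
      intro k
      have hk0 : (0:ℝ) ≤ (k:ℝ) := Nat.cast_nonneg k
      set t : ℝ := (k:ℝ) + 1 with ht
      have htpos : (0:ℝ) < t := by rw [ht]; linarith
      have hVnn : 0 ≤ V'' (t / y) := hconv _ (div_pos htpos hy)
      have hlow : ∀ z ∈ J k, (t^2/(4*y^2)) * V'' (t/y) ≤ g z := by
        intro z hz
        have hz0 : (0:ℝ) < z := lt_trans (by norm_num) (hJsub k hz)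
        have hlt : ((k:ℝ) + 3/4)/y < t/y := by
          rw [div_lt_div_iff₀ hy hy, ht]; nlinarith
        have hVle : V'' (t/y) ≤ 𝕍₂ z := h𝕍ge z (t/y) hz0 (lt_of_le_of_lt hz.2 hlt)
        have hz1' : t/(2*y) ≤ z := by
          refine le_trans ?_ hz.1.le
          rw [div_le_div_iff₀ (by positivity) hy, ht]; nlinarith
        have h1 : t^2/(4*y^2) ≤ z^2 := by
          have hsq : (t/(2*y))^2 ≤ z^2 := pow_le_pow_left₀ (by positivity) hz1' 2
          calc t^2/(4*y^2) = (t/(2*y))^2 := by field_simp; ring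
            _ ≤ z^2 := hsq
        calc (t^2/(4*y^2)) * V'' (t/y) ≤ z^2 * V'' (t/y) :=
              mul_le_mul_of_nonneg_right h1 hVnn
          _ ≤ z^2 * 𝕍₂ z := mul_le_mul_of_nonneg_left hVle (sq_nonneg z)
      have hconstint : IntegrableOn (fun _ : ℝ => t^2/(4*y^2) * V'' (t/y)) (J k) := by
        refine integrableOn_const ?_
        rw [hJ]
        simp [Real.volume_Ioc]
      have hlow' : (t^2/(4*y^2) * V'' (t/y)) * (1/(4*y)) ≤ c k := by
        have hmono := setIntegral_mono_on hconstint (hJint k) (hJmeas k) hlow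
        rw [setIntegral_const, hJ] at hmono
        have harith : ((k:ℝ) + 3/4)/y - ((k:ℝ) + 1/2)/y = 1/(4*y) := by
          field_simp; ring
        rw [Real.volume_real_Ioc, harith, max_eq_left (by positivity : (0:ℝ) ≤ 1/(4*y)),
          smul_eq_mul] at hmono
        calc (t^2/(4*y^2) * V'' (t/y)) * (1/(4*y))
            = 1/(4*y) * (t^2/(4*y^2) * V'' (t/y)) := by ring
          _ ≤ c k := hmono
      calc ((k : ℝ) + 1) ^ 2 / y ^ 2 * V'' (((k : ℝ) + 1) / y)
          = 16 * y * ((t^2/(4*y^2) * V'' (t/y)) * (1/(4*y))) := by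
            rw [ht]; field_simp; ring
        _ ≤ 16 * y * c k := mul_le_mul_of_nonneg_left hlow' (by positivity)
    -- sum of local integrals is at most the total integral
    have hd : ∀ i j : ℕ, i < j → Disjoint (J i) (J j) := by
      intro i j hij
      apply Set.Ioc_disjoint_Ioc.mpr
      have hij' : (i:ℝ) + 1 ≤ (j:ℝ) := by exact_mod_cast hij
      refine le_trans (min_le_left _ _) (le_trans ?_ (le_max_right _ _))
      rw [div_le_div_iff₀ hy hy]
      nlinarith
    have hpartial : ∀ s : Finset ℕ, ∑ k ∈ s, c k ≤ Itot := by
      intro s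
      have hdisj : (↑s : Set ℕ).Pairwise (Function.onFun Disjoint J) := by
        intro i _ j _ hij
        rcases lt_or_gt_of_ne hij with h | h
        · exact hd i j h
        · exact (hd j i h).symm
      calc ∑ k ∈ s, c k
          = ∫ z in ⋃ k ∈ s, J k, g z :=
            (integral_biUnion_finset s (fun i _ => hJmeas i) hdisj
              (fun i _ => hJint i)).symm
        _ ≤ Itot := by
            apply setIntegral_mono_set hgIoi
            · exact (ae_restrict_iff' measurableSet_Ioi).mpr
                (Filter.Eventually.of_forall hgnn)
            · exact (Set.iUnion₂_subset fun i _ => hJsub i).eventuallyLE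
    have hsum_c : Summable c := summable_of_sum_le hcnn hpartial
    have htnn : ∀ k : ℕ, 0 ≤ ((k : ℝ) + 1) ^ 2 / y ^ 2 * V'' (((k : ℝ) + 1) / y) := by
      intro k
      have hk0 : (0:ℝ) ≤ (k:ℝ) := Nat.cast_nonneg k
      exact mul_nonneg (by positivity) (hconv _ (div_pos (by linarith) hy))
    have hsum_t : Summable (fun k : ℕ =>
        ((k : ℝ) + 1) ^ 2 / y ^ 2 * V'' (((k : ℝ) + 1) / y)) :=
      Summable.of_nonneg_of_le htnn hterm (hsum_c.mul_left (16 * y))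
    calc ∑' k : ℕ, ((k : ℝ) + 1) ^ 2 / y ^ 2 * V'' (((k : ℝ) + 1) / y)
        ≤ ∑' k : ℕ, 16 * y * c k :=
          hsum_t.tsum_le_tsum hterm (hsum_c.mul_left (16 * y))
      _ = 16 * y * ∑' k : ℕ, c k := tsum_mul_left
      _ ≤ 16 * y * Itot := by
          have hts := hsum_c.tsum_le_of_sum_le hpartial
          have : (0:ℝ) ≤ 16 * y := by linarith
          exact mul_le_mul_of_nonneg_left hts this
      _ ≤ C * y := by rw [hCdef]; nlinarith
  -- nonnegativity of f₃
  have hnn : ∀ y : ℝ, 0 ≤ f₃ y := by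
    intro y
    rcases eq_or_ne y 0 with rfl | hy
    · rw [hf₃0]
    · rw [hf₃ y hy]
      refine mul_nonneg (by positivity) (tsum_nonneg fun k => ?_)
      refine mul_nonneg (by positivity) ?_
      rcases lt_or_gt_of_ne hy with h | h
      · have hu : ((k:ℝ) + 1)/y < 0 := div_neg_of_pos_of_neg (by positivity) h
        rw [← heven (((k:ℝ) + 1)/y)]
        exact hconv _ (by linarith)
      · exact hconv _ (div_pos (by positivity) h)
  refine ⟨⟨C, hCpos, key⟩, hnn, ?_⟩
  -- continuity at 0
  have hbound : ∀ y : ℝ, |y| < 1 → f₃ y ≤ C * |y| := by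
    intro y hy
    rcases eq_or_ne y 0 with rfl | hy0
    · simp [hf₃0]
    · have habs : 0 < |y| := abs_pos.mpr hy0
      have heq : f₃ y = ∑' k : ℕ, ((k : ℝ) + 1) ^ 2 / |y| ^ 2 * V'' (((k : ℝ) + 1) / |y|) := by
        rw [hf₃ y hy0, ← tsum_mul_left]
        refine tsum_congr fun k => ?_
        have h1 : V'' (((k:ℝ) + 1)/y) = V'' (((k:ℝ) + 1)/|y|) := by
          rcases lt_or_gt_of_ne hy0 with h | h
          · rw [abs_of_neg h]
            have hrw : ((k:ℝ) + 1)/y = -(((k:ℝ) + 1)/(-y)) := by ring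
            rw [hrw, heven]
          · rw [abs_of_pos h]
        have h2 : y ^ 2 = |y| ^ 2 := (sq_abs y).symm
        rw [h1, h2]; ring
      rw [heq]
      exact key |y| habs hy
  show Filter.Tendsto f₃ (nhds 0) (nhds (f₃ 0))
  rw [hf₃0]
  have hev : ∀ᶠ y : ℝ in nhds 0, |y| < 1 := by
    have hmem : Set.Ioo (-1:ℝ) 1 ∈ nhds (0:ℝ) := Ioo_mem_nhds (by norm_num) (by norm_num)
    filter_upwards [hmem] with y hy using abs_lt.mpr ⟨hy.1, hy.2⟩
  exact squeeze_zero' (Filter.Eventually.of_forall hnn) (hev.mono hbound)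
    ((continuous_const.mul continuous_abs).tendsto' 0 0 (by simp))
end
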